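/- arXiv:2501.11157 — 3 statements merged into one kernel-verified Lean document; each statement's English description precedes it below -/
import Mathlib

section
/- Let T be a tree. If there exists a path P in T such that every connected component of T \ N[P] has thinness at most k, then thin(T) ≤ k + 1. -/
open SimpleGraph

variable {V : Type*}

def Consistent (G : SimpleGraph V) (r : V → V → Prop) {k : ℕ} (C : V → Fin k) : Prop :=
  ∀ u v w, r u v → r v w → C u = C v → G.Adj u w → G.Adj v w

def IsKThin (G : SimpleGraph V) (k : ℕ) : Prop :=
  ∃ r : V → V → Prop, IsStrictTotalOrder V r ∧ ∃ C : V → Fin k, Consistent G r C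

noncomputable def Thinness (G : SimpleGraph V) : ℕ := sInf {k | IsKThin G k}

noncomputable def DanglingThin (G : SimpleGraph V) (v u : V) : ℕ :=
  Thinness (G.induce ((G.deleteEdges {s(v,u)}).connectedComponentMk u).supp)

def KNeighbor (G : SimpleGraph V) (k : ℕ) (x v : V) : Prop :=
  G.Adj x v ∧ ∃ u, G.Adj v u ∧ u ≠ x ∧ k ≤ DanglingThin G v u

def IsChild (G : SimpleGraph V) (rt x v : V) : Prop :=
  G.Adj x v ∧ G.dist rt x + 1 = G.dist rt v

def IsAncestor (G : SimpleGraph V) (rt v x : V) : Prop :=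
  v ≠ x ∧ G.dist rt v + G.dist v x = G.dist rt x

def Subtree (G : SimpleGraph V) (rt v : V) : Set V :=
  {w | G.dist rt v + G.dist v w = G.dist rt w}

def ChildKNeighbor (G : SimpleGraph V) (rt : V) (k : ℕ) (x v : V) : Prop :=
  IsChild G rt x v ∧ KNeighbor G k x v

noncomputable def Critical (G : SimpleGraph V) (rt x : V) : Prop :=
  {v | ChildKNeighbor G rt (Thinness G) x v}.ncard = 2

section AuxPLL

variable {W : Type*}

lemma sto_of_injective {α : Type*} [LinearOrder α] {f : W → α} (hf : Function.Injective f) :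
    IsStrictTotalOrder W (fun u v => f u < f v) :=
  { irrefl := fun _ => lt_irrefl _
    trans := fun _ _ _ h1 h2 => lt_trans h1 h2
    trichotomous := fun a b => by
      rcases lt_trichotomy (f a) (f b) with h | h | h
      · exact fun h1 _ => absurd h h1
      · exact fun _ _ => hf h
      · exact fun _ h2 => absurd h h2 }

lemma isKThin_mono {H : SimpleGraph W} {m n : ℕ} (hm : IsKThin H m) (hmn : m ≤ n) :
    IsKThin H n := by
  obtain ⟨r, hr, C, hC⟩ := hm
  refine ⟨r, hr, fun v => ⟨(C v).1, lt_of_lt_of_le (C v).2 hmn⟩, ?_⟩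
  intro u v w h1 h2 h3 h4
  have h3' : C u = C v := by
    have hv := congrArg Fin.val h3
    exact Fin.ext hv
  exact hC u v w h1 h2 h3' h4

lemma isKThin_card (H : SimpleGraph W) [Finite W] : IsKThin H (Nat.card W) := by
  have e := Finite.equivFin W
  refine ⟨fun u v => e u < e v, sto_of_injective e.injective, e, ?_⟩
  intro u v w h1 _ h3 _
  have : u = v := e.injective h3
  subst this
  exact absurd h1 (lt_irrefl _)

lemma isKThin_of_thinness_le {H : SimpleGraph W} [Finite W] {k : ℕ} (h : Thinness H ≤ k) :
    IsKThin H k := by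
  have hne : {m | IsKThin H m}.Nonempty := ⟨_, isKThin_card H⟩
  exact isKThin_mono (Nat.sInf_mem hne) h

abbrev L6 : Type := ℕ ×ₗ (ℕ ×ₗ (ℕ ×ₗ (ℕ ×ₗ (ℕ ×ₗ ℕ))))

def k6 (a b c d e f : ℕ) : L6 := toLex (a, toLex (b, toLex (c, toLex (d, toLex (e, f)))))

lemma k6_lt_iff {a b c d e f a' b' c' d' e' f' : ℕ} :
    k6 a b c d e f < k6 a' b' c' d' e' f' ↔
      a < a' ∨ a = a' ∧ (b < b' ∨ b = b' ∧ (c < c' ∨ c = c' ∧ (d < d' ∨ d = d' ∧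
        (e < e' ∨ e = e' ∧ f < f')))) := by
  simp [k6, Prod.Lex.lt_iff]

lemma k6_inj_last {a b c d e f a' b' c' d' e' f' : ℕ}
    (h : k6 a b c d e f = k6 a' b' c' d' e' f') : f = f' := by
  simp only [k6, toLex_inj, Prod.mk.injEq] at h
  exact h.2.2.2.2.2

lemma rank_lt_of_rel {α : Type*} [Finite α] {r : α → α → Prop} (hr : IsStrictTotalOrder α r)
    {x y : α} (hxy : r x y) : {z | r z x}.ncard < {z | r z y}.ncard := by
  haveI := hr
  apply Set.ncard_lt_ncard _ (Set.toFinite _)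
  rw [Set.ssubset_def]
  constructor
  · intro z hz
    exact _root_.trans_of r hz hxy
  · intro hsub
    have h1 : x ∈ {z | r z y} := hxy
    have h2 : x ∉ {z | r z x} := fun hc => absurd hc (irrefl_of r x)
    exact h2 (hsub h1)

lemma rel_of_rank_lt {α : Type*} [Finite α] {r : α → α → Prop} (hr : IsStrictTotalOrder α r)
    {x y : α} (h : {z | r z x}.ncard < {z | r z y}.ncard) : r x y := by
  haveI := hr
  rcases trichotomous_of r x y with h1 | h1 | h1
  · exact h1
  · subst h1; omega
  · exact absurd (rank_lt_of_rel hr h1) (by omega)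

lemma eq_of_rank_eq {α : Type*} [Finite α] {r : α → α → Prop} (hr : IsStrictTotalOrder α r)
    {x y : α} (h : {z | r z x}.ncard = {z | r z y}.ncard) : x = y := by
  haveI := hr
  rcases trichotomous_of r x y with h1 | h1 | h1
  · exact absurd (rank_lt_of_rel hr h1) (by omega)
  · exact h1
  · exact absurd (rank_lt_of_rel hr h1) (by omega)

end AuxPLL

theorem path_layout_lemma [Fintype V] (G : SimpleGraph V) (hT : G.IsTree)
    {a b : V} (p : G.Walk a b) (hp : p.IsPath) (k : ℕ)
    (h : ∀ c : (G.induce {x | ∀ y ∈ p.support, x ≠ y ∧ ¬ G.Adj y x}).ConnectedComponent,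
      Thinness ((G.induce {x | ∀ y ∈ p.support, x ≠ y ∧ ¬ G.Adj y x}).induce c.supp) ≤ k) :
    Thinness G ≤ k + 1 := by
  classical
  set R : Set V := {x | ∀ y ∈ p.support, x ≠ y ∧ ¬ G.Adj y x} with hRdef
  have hRspec : ∀ x, x ∈ R → ∀ y ∈ p.support, x ≠ y ∧ ¬ G.Adj y x := fun x hx => hx
  have hRnsupp : ∀ x, x ∈ R → x ∉ p.support := fun x hx hs => (hRspec x hx x hs).1 rfl
  have hRmem : ∀ x, x ∉ R → x ∉ p.support → ∃ y, y ∈ p.support ∧ G.Adj y x := by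
    intro x hx hxs
    rw [hRdef, Set.mem_setOf_eq] at hx
    push_neg at hx
    obtain ⟨y, hy, himp⟩ := hx
    by_cases hxy : x = y
    · exact absurd (hxy ▸ hy) hxs
    · exact ⟨y, hy, himp hxy⟩
  have haR : a ∉ R := fun hx => hRnsupp a hx p.start_mem_support
  have acyc := hT.IsAcyclic
  -- path segments
  have pathSeg : ∀ z1 z2 (hz1 : z1 ∈ p.support) (hz2 : z2 ∈ p.support),
      ∃ Wp : G.Walk z1 z2, ∀ x ∈ Wp.support, x ∈ p.support := by
    intro z1 z2 hz1 hz2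
    refine ⟨(p.takeUntil z1 hz1).reverse.append (p.takeUntil z2 hz2), ?_⟩
    intro x hx
    rw [Walk.support_append] at hx
    rcases List.mem_append.mp hx with h1 | h1
    · rw [Walk.support_reverse] at h1
      exact p.support_takeUntil_subset hz1 (List.mem_reverse.mp h1)
    · exact p.support_takeUntil_subset hz2 (List.mem_of_mem_tail h1)
  -- unique path-neighbor of a non-path vertex
  have attachUnique : ∀ y z1 z2, y ∉ p.support → z1 ∈ p.support → z2 ∈ p.support →
      G.Adj z1 y → G.Adj z2 y → z1 = z2 := by
    intro y z1 z2 hy hz1 hz2 ha1 ha2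
    by_contra hne
    obtain ⟨Wseg, hWseg⟩ := pathSeg z1 z2 hz1 hz2
    have hP1 : (Walk.cons ha1 (Walk.cons ha2.symm Walk.nil)).IsPath := by
      rw [Walk.isPath_def]
      simp only [Walk.support_cons, Walk.support_nil]
      refine List.nodup_cons.mpr ⟨?_, List.nodup_cons.mpr ⟨?_, List.nodup_singleton _⟩⟩
      · intro hc
        rcases List.mem_cons.mp hc with h1 | h1
        · exact hy (h1 ▸ hz1)
        · exact hne (List.mem_singleton.mp h1)
      · intro hc
        have h1 := List.mem_singleton.mp hc
        exact hy (by rw [h1]; exact hz2)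
    have hpeq := acyc.path_unique ⟨_, hP1⟩ ⟨Wseg.bypass, Wseg.bypass_isPath⟩
    have hval : (Walk.cons ha1 (Walk.cons ha2.symm Walk.nil)) = Wseg.bypass :=
      Subtype.ext_iff.mp hpeq
    have hymem : y ∈ (Walk.cons ha1 (Walk.cons ha2.symm Walk.nil)).support := by
      simp [Walk.support_cons]
    rw [hval] at hymem
    exact hy (hWseg y (Wseg.support_bypass_subset hymem))
  -- legs are pairwise non-adjacent
  have legsNonAdj : ∀ y1 y2 z1 z2, y1 ∉ p.support → y2 ∉ p.support → z1 ∈ p.support →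
      z2 ∈ p.support → G.Adj z1 y1 → G.Adj z2 y2 → ¬ G.Adj y1 y2 := by
    intro y1 y2 z1 z2 hy1 hy2 hz1 hz2 ha1 ha2 hadj
    by_cases hzz : z1 = z2
    · subst hzz
      have hP1 : (Walk.cons ha2 Walk.nil).IsPath := by
        rw [Walk.isPath_def]
        simp only [Walk.support_cons, Walk.support_nil]
        refine List.nodup_cons.mpr ⟨?_, List.nodup_singleton _⟩
        intro hc
        exact hy2 (by rw [← List.mem_singleton.mp hc]; exact hz1)
      have hP2 : (Walk.cons ha1 (Walk.cons hadj Walk.nil)).IsPath := by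
        rw [Walk.isPath_def]
        simp only [Walk.support_cons, Walk.support_nil]
        refine List.nodup_cons.mpr ⟨?_, List.nodup_cons.mpr ⟨?_, List.nodup_singleton _⟩⟩
        · intro hc
          rcases List.mem_cons.mp hc with h1 | h1
          · exact hy1 (h1 ▸ hz1)
          · exact hy2 ((List.mem_singleton.mp h1) ▸ hz1)
        · intro hc
          exact hadj.ne (List.mem_singleton.mp hc)
      have hpeq := acyc.path_unique ⟨_, hP1⟩ ⟨_, hP2⟩
      have hval : (Walk.cons ha2 Walk.nil : G.Walk z1 y2)
          = Walk.cons ha1 (Walk.cons hadj Walk.nil) := Subtype.ext_iff.mp hpeq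
      have hymem : y1 ∈ (Walk.cons ha1 (Walk.cons hadj Walk.nil)).support := by
        simp [Walk.support_cons]
      rw [← hval] at hymem
      simp only [Walk.support_cons, Walk.support_nil] at hymem
      rcases List.mem_cons.mp hymem with h1 | h1
      · exact hy1 (h1 ▸ hz1)
      · exact hadj.ne (List.mem_singleton.mp h1)
    · obtain ⟨Wseg, hWseg⟩ := pathSeg z1 z2 hz1 hz2
      have hP1 : (Walk.cons ha1 (Walk.cons hadj (Walk.cons ha2.symm Walk.nil))).IsPath := by
        rw [Walk.isPath_def]
        simp only [Walk.support_cons, Walk.support_nil]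
        refine List.nodup_cons.mpr ⟨?_, List.nodup_cons.mpr ⟨?_,
          List.nodup_cons.mpr ⟨?_, List.nodup_singleton _⟩⟩⟩
        · intro hc
          rcases List.mem_cons.mp hc with h1 | h1
          · exact hy1 (h1 ▸ hz1)
          · rcases List.mem_cons.mp h1 with h2 | h2
            · exact hy2 (h2 ▸ hz1)
            · exact hzz (List.mem_singleton.mp h2)
        · intro hc
          rcases List.mem_cons.mp hc with h1 | h1
          · exact hadj.ne h1
          · exact hy1 ((List.mem_singleton.mp h1) ▸ hz2)
        · intro hc
          exact hy2 ((List.mem_singleton.mp hc) ▸ hz2)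
      have hpeq := acyc.path_unique ⟨_, hP1⟩ ⟨Wseg.bypass, Wseg.bypass_isPath⟩
      have hval : (Walk.cons ha1 (Walk.cons hadj (Walk.cons ha2.symm Walk.nil)))
          = Wseg.bypass := Subtype.ext_iff.mp hpeq
      have hymem : y1 ∈ (Walk.cons ha1 (Walk.cons hadj (Walk.cons ha2.symm Walk.nil))).support := by
        simp [Walk.support_cons]
      rw [hval] at hymem
      exact hy1 (hWseg y1 (Wseg.support_bypass_subset hymem))
  -- adjacency inside R gives same component
  have mkAdj : ∀ x y (hx : x ∈ R) (hy : y ∈ R), G.Adj x y →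
      (G.induce R).connectedComponentMk ⟨y, hy⟩ = (G.induce R).connectedComponentMk ⟨x, hx⟩ := by
    intro x y hx hy hadj
    refine ConnectedComponent.sound (SimpleGraph.Adj.reachable ?_)
    exact hadj.symm
  -- uniqueness of the crossing edge of a component
  have crossUnique : ∀ x1 q1 x2 q2 (hx1 : x1 ∈ R) (hx2 : x2 ∈ R),
      ((G.induce R).connectedComponentMk ⟨x1, hx1⟩
        = (G.induce R).connectedComponentMk ⟨x2, hx2⟩) →
      q1 ∉ R → q2 ∉ R → G.Adj q1 x1 → G.Adj q2 x2 → x1 = x2 ∧ q1 = q2 := by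
    intro x1 q1 x2 q2 hx1 hx2 hcomp hq1 hq2 ha1 ha2
    obtain ⟨W0⟩ := ConnectedComponent.exact hcomp
    set Wb : G.Walk x1 x2 :=
      ((W0.map (SimpleGraph.Embedding.induce R).toHom).bypass.copy rfl rfl) with hWbdef
    have hWbpath : Wb.IsPath := by
      rw [hWbdef]
      refine (Walk.isPath_copy ..).mpr ?_
      exact Walk.bypass_isPath _
    have hWbR : ∀ y ∈ Wb.support, y ∈ R := by
      intro y hy
      rw [hWbdef] at hy
      replace hy := Eq.mp (congrArg (y ∈ ·) (Walk.support_copy ..)) hy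
      have h2 := (W0.map (SimpleGraph.Embedding.induce R).toHom).support_bypass_subset hy
      rw [Walk.support_map] at h2
      obtain ⟨y', _, hyy⟩ := List.mem_map.mp h2
      rw [← hyy]
      exact y'.2
    by_cases hqq : q1 = q2
    · subst hqq
      by_cases hxx : x1 = x2
      · exact ⟨hxx, rfl⟩
      · exfalso
        have hP1 : (Walk.cons ha2 Walk.nil).IsPath := by
          rw [Walk.isPath_def]
          simp only [Walk.support_cons, Walk.support_nil]
          refine List.nodup_cons.mpr ⟨?_, List.nodup_singleton _⟩
          intro hc
          exact hq1 (by rw [List.mem_singleton.mp hc]; exact hx2)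
        have hP2 : (Walk.cons ha1 Wb).IsPath :=
          hWbpath.cons (fun hc => hq1 (hWbR _ hc))
        have hpeq := acyc.path_unique ⟨_, hP1⟩ ⟨_, hP2⟩
        have hval : (Walk.cons ha2 Walk.nil : G.Walk q1 x2) = Walk.cons ha1 Wb :=
          Subtype.ext_iff.mp hpeq
        have hmem : x1 ∈ (Walk.cons ha1 Wb).support := by
          rw [Walk.support_cons]
          exact List.mem_cons.mpr (Or.inr Wb.start_mem_support)
        rw [← hval] at hmem
        simp only [Walk.support_cons, Walk.support_nil] at hmem
        rcases List.mem_cons.mp hmem with h1 | h1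
        · exact hq1 (h1 ▸ hx1)
        · exact hxx (List.mem_singleton.mp h1)
    · exfalso
      have hq1s : q1 ∉ p.support := fun hs => (hRspec x1 hx1 q1 hs).2 ha1
      have hq2s : q2 ∉ p.support := fun hs => (hRspec x2 hx2 q2 hs).2 ha2
      obtain ⟨z1, hz1s, hz1a⟩ := hRmem q1 hq1 hq1s
      obtain ⟨z2, hz2s, hz2a⟩ := hRmem q2 hq2 hq2s
      have hconcat : (Wb.concat ha2.symm).IsPath := by
        rw [Walk.isPath_def, Walk.support_concat]
        refine List.Nodup.append hWbpath.support_nodup (List.nodup_singleton _) ?_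
        rw [List.disjoint_singleton]
        exact fun hc => hq2 (hWbR _ hc)
      have hPa : (Walk.cons ha1 (Wb.concat ha2.symm)).IsPath := by
        refine hconcat.cons ?_
        rw [Walk.support_concat]
        intro hc
        rcases List.mem_append.mp hc with h1 | h1
        · exact hq1 (hWbR _ h1)
        · exact hqq (List.mem_singleton.mp h1)
      obtain ⟨Wseg, hWsegsupp⟩ := pathSeg z1 z2 hz1s hz2s
      set Wfull : G.Walk q1 q2 := Walk.cons hz1a.symm (Wseg.concat hz2a) with hWfulldef
      have hWfull_noR : ∀ y ∈ Wfull.support, y ∉ R := by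
        intro y hy
        rw [hWfulldef, Walk.support_cons] at hy
        rcases List.mem_cons.mp hy with h1 | h1
        · exact h1 ▸ hq1
        · rw [Walk.support_concat] at h1
          rcases List.mem_append.mp h1 with h2 | h2
          · exact fun hyR => hRnsupp y hyR (hWsegsupp y h2)
          · exact (List.mem_singleton.mp h2) ▸ hq2
      have hpeq := acyc.path_unique ⟨_, hPa⟩ ⟨Wfull.bypass, Wfull.bypass_isPath⟩
      have hval : Walk.cons ha1 (Wb.concat ha2.symm) = Wfull.bypass :=
        Subtype.ext_iff.mp hpeq
      have hmem : x1 ∈ (Walk.cons ha1 (Wb.concat ha2.symm)).support := by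
        rw [Walk.support_cons]
        refine List.mem_cons.mpr (Or.inr ?_)
        rw [Walk.support_concat]
        exact List.mem_append.mpr (Or.inl Wb.start_mem_support)
      rw [hval] at hmem
      exact hWfull_noR x1 (Wfull.support_bypass_subset hmem) hx1
  -- exit lemma and attachments
  have exitLemma : ∀ (s t : V) (W : G.Walk s t) (hs : s ∈ R), t ∉ R →
      ∃ x q : V, ∃ hx : x ∈ R, q ∉ R ∧ G.Adj q x ∧
        (G.induce R).connectedComponentMk ⟨x, hx⟩
          = (G.induce R).connectedComponentMk ⟨s, hs⟩ := by
    intro s t W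
    induction W with
    | nil => intro hs ht; exact absurd hs ht
    | @cons s' m t' hadj W ih =>
      intro hs ht
      by_cases hm : m ∈ R
      · obtain ⟨x, q, hx, hq, hqx, hcomp⟩ := ih hm ht
        exact ⟨x, q, hx, hq, hqx, hcomp.trans (mkAdj s' m hs hm hadj)⟩
      · exact ⟨s', m, hs, hm, hadj.symm, rfl⟩
  have hattach : ∀ c : (G.induce R).ConnectedComponent, ∃ x q : V, ∃ hx : x ∈ R,
      ((G.induce R).connectedComponentMk ⟨x, hx⟩ = c) ∧ q ∉ R ∧ G.Adj q x ∧
      ∀ x' q' (hx' : x' ∈ R), (G.induce R).connectedComponentMk ⟨x', hx'⟩ = c → q' ∉ R →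
        G.Adj q' x' → x' = x ∧ q' = q := by
    intro c
    obtain ⟨⟨s, hsR⟩, hmk⟩ := c.exists_rep
    obtain ⟨x, q, hx, hq, hqx, hcomp⟩ :=
      exitLemma s a ((hT.isConnected.preconnected s a).some) hsR haR
    refine ⟨x, q, hx, hcomp.trans hmk, hq, hqx, ?_⟩
    intro x' q' hx' hc' hq' hadj'
    exact crossUnique x' q' x q hx' hx (hc'.trans (hcomp.trans hmk).symm) hq' hq hadj' hqx
  choose ca qa hcaR hcamk hqaR hqaAdj hqaUniq using hattach
  have qa_nsupp : ∀ c, qa c ∉ p.support := fun c hs => (hRspec _ (hcaR c) _ hs).2 (hqaAdj c)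
  have caInj : ∀ c c', ca c = ca c' → c = c' := by
    intro c c' he
    rw [← hcamk c, ← hcamk c']
    congr 1
    exact Subtype.ext he
  -- positions along the path
  set pos : V → ℕ := fun y => if hy : y ∈ p.support then (p.takeUntil y hy).length else 0
    with hposdef
  have hposeq : ∀ y (hy : y ∈ p.support), pos y = (p.takeUntil y hy).length := by
    intro y hy; simp only [hposdef]; rw [dif_pos hy]
  have getVert_pos : ∀ y (hy : y ∈ p.support), p.getVert (pos y) = y := by
    intro y hy
    have hsplit := p.take_spec hy
    have h2 : ((p.takeUntil y hy).append (p.dropUntil y hy)).getVert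
        ((p.takeUntil y hy).length) = y := by
      rw [Walk.getVert_append]
      simp
    rw [hsplit] at h2
    rw [hposeq y hy]
    exact h2
  have posInj : ∀ y1 y2, y1 ∈ p.support → y2 ∈ p.support → pos y1 = pos y2 → y1 = y2 := by
    intro y1 y2 h1 h2 he
    rw [← getVert_pos y1 h1, ← getVert_pos y2 h2, he]
  have posDist : ∀ y (hy : y ∈ p.support), G.dist a y = pos y := by
    intro y hy
    rw [hposeq y hy]
    have h1 : G.dist a y ≤ (p.takeUntil y hy).length := dist_le _
    have h2 : (p.takeUntil y hy).length ≤ G.dist a y := by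
      obtain ⟨W, hW⟩ := (hT.isConnected.preconnected a y).exists_walk_length_eq_dist
      have hpeq := acyc.path_unique ⟨_, hp.takeUntil hy⟩ W.toPath
      have hval : (p.takeUntil y hy) = W.bypass := Subtype.ext_iff.mp hpeq
      rw [hval, ← hW]
      exact Walk.length_bypass_le _
    omega
  have adjPos : ∀ x y, x ∈ p.support → y ∈ p.support → G.Adj x y → pos x < pos y →
      pos y = pos x + 1 := by
    intro x y hx hy hadj hlt
    have h1 : G.dist a y ≤ G.dist a x + G.dist x y := hT.isConnected.dist_triangle
    have h2 : G.dist x y ≤ 1 := by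
      have h3 := dist_le (Walk.cons hadj Walk.nil)
      simpa using h3
    rw [posDist x hx, posDist y hy] at h1
    omega
  -- component thinness data
  have hthin : ∀ c : (G.induce R).ConnectedComponent,
      ∃ r : ↥c.supp → ↥c.supp → Prop, IsStrictTotalOrder ↥c.supp r ∧
        ∃ C : ↥c.supp → Fin k, Consistent ((G.induce R).induce c.supp) r C :=
    fun c => isKThin_of_thinness_le (h c)
  choose rc hrc Cc hCc using hthin
  -- global injections and ranks
  set tb : V → ℕ := fun v => ((Fintype.equivFin V) v : ℕ) with htbdef
  have htb_inj : ∀ x y, tb x = tb y → x = y := by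
    intro x y hxy
    simp only [htbdef] at hxy
    exact (Fintype.equivFin V).injective (Fin.ext hxy)
  set z : V → V := fun q => if hq : ∃ y, y ∈ p.support ∧ G.Adj y q then hq.choose else q
    with hzdef
  have hzspec : ∀ q, q ∉ R → q ∉ p.support → z q ∈ p.support ∧ G.Adj (z q) q := by
    intro q h1 h2
    have hex : ∃ y, y ∈ p.support ∧ G.Adj y q := hRmem q h1 h2
    simp only [hzdef]
    rw [dif_pos hex]
    exact hex.choose_spec
  set rkV : V → ℕ := fun v =>
    if hv : v ∈ R then
      {y | rc ((G.induce R).connectedComponentMk ⟨v, hv⟩) y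
        ⟨⟨v, hv⟩, (ConnectedComponent.mem_supp_iff _ _).mpr rfl⟩}.ncard
    else 0 with hrkVdef
  have rkV_eq : ∀ (c : (G.induce R).ConnectedComponent) (x : ↥c.supp),
      rkV x.1.1 = {y | rc c y x}.ncard := by
    intro c x
    obtain ⟨⟨xv, hxv⟩, hxc⟩ := x
    have hc : (G.induce R).connectedComponentMk ⟨xv, hxv⟩ = c :=
      (ConnectedComponent.mem_supp_iff _ _).mp hxc
    subst hc
    simp only [hrkVdef]
    rw [dif_pos hxv]
  -- the order key
  set key : V → L6 := fun v =>
    if hv : v ∈ R then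
      k6 (pos (z (qa ((G.induce R).connectedComponentMk ⟨v, hv⟩)))) 0
        (tb (qa ((G.induce R).connectedComponentMk ⟨v, hv⟩)))
        (1 + tb (ca ((G.induce R).connectedComponentMk ⟨v, hv⟩)))
        (rkV v) (tb v)
    else if v ∈ p.support then k6 (pos v) 1 0 0 0 (tb v)
    else k6 (pos (z v)) 0 (tb v) 0 0 (tb v) with hkeydef
  have keyR : ∀ v (hv : v ∈ R), key v =
      k6 (pos (z (qa ((G.induce R).connectedComponentMk ⟨v, hv⟩)))) 0
        (tb (qa ((G.induce R).connectedComponentMk ⟨v, hv⟩)))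
        (1 + tb (ca ((G.induce R).connectedComponentMk ⟨v, hv⟩)))
        (rkV v) (tb v) := by
    intro v hv; simp only [hkeydef]; rw [dif_pos hv]
  have keyP : ∀ v, v ∉ R → v ∈ p.support → key v = k6 (pos v) 1 0 0 0 (tb v) := by
    intro v hv hvs; simp only [hkeydef]; rw [dif_neg hv, if_pos hvs]
  have keyL : ∀ v, v ∉ R → v ∉ p.support → key v = k6 (pos (z v)) 0 (tb v) 0 0 (tb v) := by
    intro v hv hvs; simp only [hkeydef]; rw [dif_neg hv, if_neg hvs]
  -- the coloring
  set Col : V → Fin (k+1) := fun v =>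
    if hv : v ∈ R then
      (Cc ((G.induce R).connectedComponentMk ⟨v, hv⟩)
        ⟨⟨v, hv⟩, (ConnectedComponent.mem_supp_iff _ _).mpr rfl⟩).castSucc
    else Fin.last k with hColdef
  have ColR : ∀ v (hv : v ∈ R), Col v =
      (Cc ((G.induce R).connectedComponentMk ⟨v, hv⟩)
        ⟨⟨v, hv⟩, (ConnectedComponent.mem_supp_iff _ _).mpr rfl⟩).castSucc := by
    intro v hv; simp only [hColdef]; rw [dif_pos hv]
  have ColN : ∀ v, v ∉ R → Col v = Fin.last k := by
    intro v hv; simp only [hColdef]; rw [dif_neg hv]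
  have ColV_eq : ∀ (c : (G.induce R).ConnectedComponent) (x : ↥c.supp),
      Col x.1.1 = (Cc c x).castSucc := by
    intro c x
    obtain ⟨⟨xv, hxv⟩, hxc⟩ := x
    have hc : (G.induce R).connectedComponentMk ⟨xv, hxv⟩ = c :=
      (ConnectedComponent.mem_supp_iff _ _).mp hxc
    subst hc
    simp only [hColdef]
    rw [dif_pos hxv]
  -- key injectivity
  have key_last : ∀ v, ∃ A B C D E, key v = k6 A B C D E (tb v) := by
    intro v
    by_cases hv : v ∈ R
    · exact ⟨_, _, _, _, _, keyR v hv⟩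
    · by_cases hvs : v ∈ p.support
      · exact ⟨_, _, _, _, _, keyP v hv hvs⟩
      · exact ⟨_, _, _, _, _, keyL v hv hvs⟩
  have hkey_inj : Function.Injective key := by
    intro x y hxy
    obtain ⟨A1, B1, C1, D1, E1, h1⟩ := key_last x
    obtain ⟨A2, B2, C2, D2, E2, h2⟩ := key_last y
    rw [h1, h2] at hxy
    exact htb_inj x y (k6_inj_last hxy)
  apply Nat.sInf_le
  show IsKThin G (k + 1)
  refine ⟨fun u v => key u < key v, sto_of_injective hkey_inj, Col, ?_⟩
  intro u v w hruv hrvw hcol hadj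
  by_cases hu : u ∈ R
  · -- u in a component
    have hv : v ∈ R := by
      by_contra hv
      rw [ColR u hu, ColN v hv] at hcol
      exact absurd hcol (Fin.castSucc_lt_last _).ne
    by_cases hw : w ∈ R
    · -- w in the same component
      have hruv0 := hruv
      have hrvw0 := hrvw
      have hcw : (G.induce R).connectedComponentMk ⟨w, hw⟩
          = (G.induce R).connectedComponentMk ⟨u, hu⟩ := mkAdj u w hu hw hadj
      have hKu := keyR u hu
      have hKv := keyR v hv
      have hKw := keyR w hw
      rw [hcw] at hKw
      rw [hKu, hKv] at hruv
      rw [hKv, hKw] at hrvw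
      rw [k6_lt_iff] at hruv hrvw
      have hMv : tb (ca ((G.induce R).connectedComponentMk ⟨v, hv⟩))
          = tb (ca ((G.induce R).connectedComponentMk ⟨u, hu⟩)) := by omega
      have hcv : (G.induce R).connectedComponentMk ⟨v, hv⟩
          = (G.induce R).connectedComponentMk ⟨u, hu⟩ := caInj _ _ (htb_inj _ _ hMv)
      set c := (G.induce R).connectedComponentMk ⟨u, hu⟩ with hcdef
      have hmu : (⟨u, hu⟩ : ↥R) ∈ c.supp := (ConnectedComponent.mem_supp_iff _ _).mpr hcdef.symm
      have hmv : (⟨v, hv⟩ : ↥R) ∈ c.supp := (ConnectedComponent.mem_supp_iff _ _).mpr hcv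
      have hmw : (⟨w, hw⟩ : ↥R) ∈ c.supp := (ConnectedComponent.mem_supp_iff _ _).mpr hcw
      set uh : ↥c.supp := ⟨⟨u, hu⟩, hmu⟩ with huhdef
      set vh : ↥c.supp := ⟨⟨v, hv⟩, hmv⟩ with hvhdef
      set wh : ↥c.supp := ⟨⟨w, hw⟩, hmw⟩ with hwhdef
      have hru : rkV u = {y | rc c y uh}.ncard := rkV_eq c uh
      have hrv : rkV v = {y | rc c y vh}.ncard := rkV_eq c vh
      have hrw : rkV w = {y | rc c y wh}.ncard := rkV_eq c wh
      have hrkuv : rkV u < rkV v ∨ rkV u = rkV v := by omega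
      have hrkvw : rkV v < rkV w ∨ rkV v = rkV w := by omega
      rcases hrkuv with hlt1 | heq1
      · rcases hrkvw with hlt2 | heq2
        · have hrc1 : rc c uh vh := by
            refine rel_of_rank_lt (hrc c) ?_
            rw [← hru, ← hrv]; exact hlt1
          have hrc2 : rc c vh wh := by
            refine rel_of_rank_lt (hrc c) ?_
            rw [← hrv, ← hrw]; exact hlt2
          have hcc : Cc c uh = Cc c vh := by
            have e1 : Col u = (Cc c uh).castSucc := ColV_eq c uh
            have e2 : Col v = (Cc c vh).castSucc := ColV_eq c vh
            rw [e1, e2] at hcol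
            exact Fin.castSucc_injective _ hcol
          have hadj' : ((G.induce R).induce c.supp).Adj uh wh := hadj
          exact hCc c uh vh wh hrc1 hrc2 hcc hadj'
        · have hvw : vh = wh := by
            refine eq_of_rank_eq (hrc c) ?_
            rw [← hrv, ← hrw]; exact heq2
          have hvw' : v = w := congrArg (fun x : ↥c.supp => x.1.1) hvw
          exact absurd (hvw' ▸ hrvw0) (lt_irrefl _)
      · have huv : uh = vh := by
          refine eq_of_rank_eq (hrc c) ?_
          rw [← hru, ← hrv]; exact heq1
        have huv' : u = v := congrArg (fun x : ↥c.supp => x.1.1) huv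
        exact absurd (huv' ▸ hruv0) (lt_irrefl _)
    · -- w outside R: crossing edge points backwards
      obtain ⟨hu_eq, hw_eq⟩ :=
        hqaUniq ((G.induce R).connectedComponentMk ⟨u, hu⟩) u w hu rfl hw hadj.symm
      have hKu := keyR u hu
      have hKw := keyL w hw (by rw [hw_eq]; exact qa_nsupp _)
      have hkwu : key w < key u := by
        rw [hKu, hKw, k6_lt_iff, hw_eq]
        omega
      exact absurd (hruv.trans (hrvw.trans hkwu)) (lt_irrefl _)
  · -- u not in R
    have hv : v ∉ R := by
      intro hv
      rw [ColN u hu, ColR v hv] at hcol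
      exact absurd hcol.symm (Fin.castSucc_lt_last _).ne
    by_cases hw : w ∈ R
    · -- w in a component: u is its unique crossing neighbor; nothing strictly between
      obtain ⟨hw_eq, hu_eq⟩ :=
        hqaUniq ((G.induce R).connectedComponentMk ⟨w, hw⟩) w u hw rfl hu hadj
      have huns : u ∉ p.support := by rw [hu_eq]; exact qa_nsupp _
      have hKu := keyL u hu huns
      have hKw := keyR w hw
      by_cases hvs : v ∈ p.support
      · have hKv := keyP v hv hvs
        rw [hKu, hKv] at hruv
        rw [hKv, hKw] at hrvw
        rw [k6_lt_iff] at hruv hrvw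
        rw [hu_eq] at hruv
        exfalso; omega
      · have hKv := keyL v hv hvs
        rw [hKu, hKv] at hruv
        rw [hKv, hKw] at hrvw
        rw [k6_lt_iff] at hruv hrvw
        rw [hu_eq] at hruv
        exfalso; omega
    · by_cases hws : w ∈ p.support
      · by_cases hus : u ∈ p.support
        · -- both on the path
          have hKu := keyP u hu hus
          have hKw := keyP w hw hws
          have hne : pos u ≠ pos w := fun hh => hadj.ne (posInj u w hus hws hh)
          have hptw : pos u < pos w := by
            have h3 : key u < key w := hruv.trans hrvw
            rw [hKu, hKw, k6_lt_iff] at h3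
            omega
          have hpw1 : pos w = pos u + 1 := adjPos u w hus hws hadj hptw
          by_cases hvs : v ∈ p.support
          · have hKv := keyP v hv hvs
            rw [hKu, hKv] at hruv
            rw [hKv, hKw] at hrvw
            rw [k6_lt_iff] at hruv hrvw
            have h5 : pos v = pos u ∨ pos v = pos w := by omega
            rcases h5 with h5 | h5
            · have he : v = u := posInj v u hvs hus h5
              have htbe : tb v = tb u := by rw [he]
              exfalso; omega
            · have he : v = w := posInj v w hvs hws h5
              have htbe : tb v = tb w := by rw [he]
              exfalso; omega
          · have hKv := keyL v hv hvs
            rw [hKu, hKv] at hruv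
            rw [hKv, hKw] at hrvw
            rw [k6_lt_iff] at hruv hrvw
            have hzv := hzspec v hv hvs
            have h5 : pos (z v) = pos w := by omega
            have h6 : z v = w := posInj _ _ hzv.1 hws h5
            rw [← h6]
            exact hzv.2.symm
        · -- u is a leg of the path
          have hzu := hzspec u hu hus
          have hweq : w = z u := attachUnique u w (z u) hus hws hzu.1 hadj.symm hzu.2
          have hKu := keyL u hu hus
          have hKw := keyP w hw hws
          by_cases hvs : v ∈ p.support
          · have hKv := keyP v hv hvs
            rw [hKu, hKv] at hruv
            rw [hKv, hKw] at hrvw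
            rw [k6_lt_iff] at hruv hrvw
            rw [hweq] at hrvw
            have h5 : pos v = pos (z u) := by omega
            have h6 : v = z u := posInj v (z u) hvs hzu.1 h5
            have h7 : tb v = tb (z u) := by rw [h6]
            exfalso; omega
          · have hKv := keyL v hv hvs
            rw [hKu, hKv] at hruv
            rw [hKv, hKw] at hrvw
            rw [k6_lt_iff] at hruv hrvw
            rw [hweq] at hrvw
            have hzv := hzspec v hv hvs
            have h5 : pos (z v) = pos (z u) := by omega
            have h6 : z v = z u := posInj _ _ hzv.1 hzu.1 h5
            rw [hweq, ← h6]
            exact hzv.2.symm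
      · -- w is a leg
        by_cases hus : u ∈ p.support
        · have hzw := hzspec w hw hws
          have hueq : u = z w := attachUnique w u (z w) hws hus hzw.1 hadj hzw.2
          have hKu := keyP u hu hus
          have hKw := keyL w hw hws
          have h3 : key u < key w := hruv.trans hrvw
          rw [hKu, hKw, k6_lt_iff] at h3
          rw [hueq] at h3
          exfalso; omega
        · have hzu := hzspec u hu hus
          have hzw := hzspec w hw hws
          exact absurd hadj (legsNonAdj u w (z u) (z w) hus hws hzu.1 hzw.1 hzu.2 hzw.2)
end

section
/- Let T be a tree and k a natural number. If some vertex w of T has at least three k-neighbors, then thin(T) ≥ k + 1. -/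
open SimpleGraph

variable {V : Type*}

section Helpers
variable {r : V → V → Prop}
lemma sto_trans (hr : IsStrictTotalOrder V r) {a b c : V} (h1 : r a b) (h2 : r b c) : r a c :=
  hr.toIsStrictOrder.toIsTrans.trans a b c h1 h2
lemma sto_irrefl (hr : IsStrictTotalOrder V r) (a : V) : ¬ r a a :=
  by haveI := hr; exact irrefl_of r a
lemma sto_tricho (hr : IsStrictTotalOrder V r) (a b : V) : r a b ∨ a = b ∨ r b a :=
  by haveI := hr; exact trichotomous_of r a b
def RLe (r : V → V → Prop) (a b : V) : Prop := r a b ∨ a = b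
lemma RLe.refl (a : V) : RLe r a a := Or.inr rfl
lemma rle_trans (hr : IsStrictTotalOrder V r) {a b c : V} (h1 : RLe r a b) (h2 : RLe r b c) :
    RLe r a c := by
  rcases h1 with h1 | rfl
  · rcases h2 with h2 | rfl
    · exact Or.inl (sto_trans hr h1 h2)
    · exact Or.inl h1
  · exact h2
lemma rle_trans_lt (hr : IsStrictTotalOrder V r) {a b c : V} (h1 : RLe r a b) (h2 : r b c) :
    r a c := by
  rcases h1 with h1 | rfl
  · exact sto_trans hr h1 h2
  · exact h2
lemma lt_trans_rle (hr : IsStrictTotalOrder V r) {a b c : V} (h1 : r a b) (h2 : RLe r b c) :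
    r a c := by
  rcases h2 with h2 | rfl
  · exact sto_trans hr h1 h2
  · exact h1
lemma rle_antisymm (hr : IsStrictTotalOrder V r) {a b : V} (h1 : RLe r a b) (h2 : RLe r b a) :
    a = b := by
  rcases h1 with h1 | rfl
  · rcases h2 with h2 | rfl
    · exact absurd (sto_trans hr h1 h2) (sto_irrefl hr a)
    · rfl
  · rfl
lemma not_lt_iff_rle (hr : IsStrictTotalOrder V r) {a b : V} : ¬ r a b ↔ RLe r b a := by
  constructor
  · intro h
    rcases sto_tricho hr a b with h1 | rfl | h1
    · exact absurd h1 h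
    · exact Or.inr rfl
    · exact Or.inl h1
  · intro h h2
    exact sto_irrefl hr b (rle_trans_lt hr h h2)
lemma sto_wf [Finite V] (hr : IsStrictTotalOrder V r) : WellFounded r :=
  @Finite.wellFounded_of_trans_of_irrefl V _ r
    ⟨fun a b c h1 h2 => sto_trans hr h1 h2⟩ ⟨sto_irrefl hr⟩
end Helpers

section BusyLeader
variable {r : V → V → Prop} {t : ℕ}

/-- class `c` is busy at the cut just after `p`. -/
def Busy (G : SimpleGraph V) (r : V → V → Prop) (C : V → Fin t) (S : Set V)
    (c : Fin t) (p : V) : Prop :=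
  ∃ x y, x ∈ S ∧ y ∈ S ∧ G.Adj x y ∧ RLe r x p ∧ r p y ∧ C x = c

/-- class `c` is busy throughout the closed interval `[z,p]` (within `S`). -/
def SegOn (G : SimpleGraph V) (r : V → V → Prop) (C : V → Fin t) (S : Set V)
    (c : Fin t) (z p : V) : Prop :=
  z ∈ S ∧ RLe r z p ∧ ∀ q, q ∈ S → RLe r z q → RLe r q p → Busy G r C S c q

lemma segOn_self (hr : IsStrictTotalOrder V r) {G : SimpleGraph V} {C : V → Fin t} {S : Set V}
    {c : Fin t} {p : V} (hp : p ∈ S) (hb : Busy G r C S c p) :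
    SegOn G r C S c p p := by
  refine ⟨hp, RLe.refl p, fun q hq h1 h2 => ?_⟩
  rw [rle_antisymm hr h2 h1]
  exact hb

variable [Finite V]

noncomputable def leader (hr : IsStrictTotalOrder V r) (G : SimpleGraph V) (C : V → Fin t)
    (S : Set V) (c : Fin t) (p : V) : V := by
  classical
  exact if h : p ∈ S ∧ Busy G r C S c p then
    (sto_wf hr).min {z | SegOn G r C S c z p} ⟨p, segOn_self hr h.1 h.2⟩
  else p

variable (hr : IsStrictTotalOrder V r) {G : SimpleGraph V} {C : V → Fin t} {S : Set V}

lemma leader_segOn {c : Fin t} {p : V} (hp : p ∈ S) (hb : Busy G r C S c p) :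
    SegOn G r C S c (leader hr G C S c p) p := by
  rw [leader, dif_pos ⟨hp, hb⟩]
  exact WellFounded.min_mem _ {z | SegOn G r C S c z p} ⟨p, segOn_self hr hp hb⟩

lemma leader_min {c : Fin t} {p : V} (hp : p ∈ S) (hb : Busy G r C S c p)
    {z : V} (hz : SegOn G r C S c z p) : RLe r (leader hr G C S c p) z := by
  rw [← not_lt_iff_rle hr]
  rw [leader, dif_pos ⟨hp, hb⟩]
  exact WellFounded.not_lt_min _ {z | SegOn G r C S c z p} hz

lemma leader_mem {c : Fin t} {p : V} (hp : p ∈ S) (hb : Busy G r C S c p) :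
    leader hr G C S c p ∈ S := (leader_segOn hr hp hb).1

lemma leader_le {c : Fin t} {p : V} (hp : p ∈ S) (hb : Busy G r C S c p) :
    RLe r (leader hr G C S c p) p := (leader_segOn hr hp hb).2.1

lemma busy_leader {c : Fin t} {p : V} (hp : p ∈ S) (hb : Busy G r C S c p) :
    Busy G r C S c (leader hr G C S c p) :=
  (leader_segOn hr hp hb).2.2 _ (leader_mem hr hp hb) (RLe.refl _) (leader_le hr hp hb)

lemma leader_stable {c : Fin t} {p q : V} (hp : p ∈ S) (hb : Busy G r C S c p)
    (hq : q ∈ S) (h1 : RLe r (leader hr G C S c p) q) (h2 : RLe r q p) :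
    leader hr G C S c q = leader hr G C S c p := by
  have hso : SegOn G r C S c (leader hr G C S c p) q :=
    ⟨leader_mem hr hp hb, h1, fun q' hq' ha hb' =>
      (leader_segOn hr hp hb).2.2 q' hq' ha (rle_trans hr hb' h2)⟩
  have hbq : Busy G r C S c q := hso.2.2 q hq h1 (RLe.refl q)
  have hle1 : RLe r (leader hr G C S c q) (leader hr G C S c p) := leader_min hr hq hbq hso
  have hso2 : SegOn G r C S c (leader hr G C S c q) p := by
    refine ⟨leader_mem hr hq hbq, rle_trans hr (leader_le hr hq hbq) h2, fun q' hq' ha hb' => ?_⟩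
    rcases sto_tricho hr q q' with hlt | rfl | hgt
    · exact (leader_segOn hr hp hb).2.2 q' hq' (rle_trans hr h1 (Or.inl hlt)) hb'
    · exact hbq
    · exact (leader_segOn hr hq hbq).2.2 q' hq' ha (Or.inl hgt)
  have hle2 : RLe r (leader hr G C S c p) (leader hr G C S c q) := leader_min hr hp hb hso2
  exact rle_antisymm hr hle1 hle2
end BusyLeader

section Coloring
variable {r : V → V → Prop} [Finite V]

lemma wf_swap (hr : IsStrictTotalOrder V r) : WellFounded (Function.swap r) :=
  @Finite.wellFounded_of_trans_of_irrefl V _ _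
    ⟨fun _ _ _ h1 h2 => sto_trans hr h2 h1⟩ ⟨fun a h => sto_irrefl hr a h⟩

lemma seg_coloring (hr : IsStrictTotalOrder V r) (G : SimpleGraph V) {t : ℕ} (C : V → Fin t)
    (S : Set V) {T : ℕ} (hT : t = T + 2)
    (hbound : ∀ p ∈ S, ∃ c, C p ≠ c ∧ ¬ Busy G r C S c p) :
    ∃ col : Fin t → V → Fin (T + 1), ∀ p, p ∈ S → ∀ c c', Busy G r C S c p →
      Busy G r C S c' p → c ≠ c' →
      col c (leader hr G C S c p) ≠ col c' (leader hr G C S c' p) := by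
  classical
  haveI : Fintype V := Fintype.ofFinite V
  suffices H : ∀ F : Finset (Fin t × V), ∃ col : Fin t → V → Fin (T+1),
      ∀ c ℓ c' ℓ', (c, ℓ) ∈ F → (c', ℓ') ∈ F → c ≠ c' →
      (∃ p, p ∈ S ∧ Busy G r C S c p ∧ leader hr G C S c p = ℓ ∧
        Busy G r C S c' p ∧ leader hr G C S c' p = ℓ') →
      col c ℓ ≠ col c' ℓ' by
    obtain ⟨col, hcol⟩ := H Finset.univ
    exact ⟨col, fun p hp c c' hb hb' hne => hcol _ _ _ _ (Finset.mem_univ _) (Finset.mem_univ _)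
      hne ⟨p, hp, hb, rfl, hb', rfl⟩⟩
  intro F
  induction F using Finset.strongInduction with
  | _ F ih =>
  rcases Finset.eq_empty_or_nonempty F with rfl | hne
  · exact ⟨fun _ _ => ⟨0, Nat.succ_pos T⟩, by simp⟩
  have hcne : {ℓ | ∃ c, (c, ℓ) ∈ F}.Nonempty := by
    obtain ⟨s0, hs0⟩ := hne
    exact ⟨s0.2, s0.1, by rwa [Prod.mk.eta]⟩
  set ℓmax := (wf_swap hr).min {ℓ | ∃ c, (c, ℓ) ∈ F} hcne with hℓdef
  have hℓmem : ℓmax ∈ {ℓ | ∃ c, (c, ℓ) ∈ F} := WellFounded.min_mem _ _ _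
  have hℓmax : ∀ ℓ', (∃ c, (c, ℓ') ∈ F) → ¬ r ℓmax ℓ' := fun ℓ' hℓ' =>
    WellFounded.not_lt_min (wf_swap hr) _ hℓ'
  obtain ⟨cmax, hcm⟩ := hℓmem
  obtain ⟨col₀, hcol₀⟩ := ih (F.erase (cmax, ℓmax)) (Finset.erase_ssubset hcm)
  by_cases hreal : ∃ p, p ∈ S ∧ Busy G r C S cmax p ∧ leader hr G C S cmax p = ℓmax
  · obtain ⟨p₀, hp₀, hb₀, hl₀⟩ := hreal
    have hℓS : ℓmax ∈ S := hl₀ ▸ leader_mem hr hp₀ hb₀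
    have hbml : Busy G r C S cmax ℓmax := hl₀ ▸ busy_leader hr hp₀ hb₀
    obtain ⟨c₀, hc₀ne, hc₀nb⟩ := hbound ℓmax hℓS
    have hcmc₀ : cmax ≠ c₀ := fun h => hc₀nb (h ▸ hbml)
    set s₀ : Finset (Fin t) :=
      Finset.univ.filter (fun c => c ≠ cmax ∧ Busy G r C S c ℓmax) with hs₀def
    have hs₀card : s₀.card ≤ T := by
      have hsub : s₀ ⊆ (Finset.univ.erase c₀).erase cmax := by
        intro c hc
        rw [hs₀def, Finset.mem_filter] at hc
        refine Finset.mem_erase.mpr ⟨hc.2.1, Finset.mem_erase.mpr ⟨?_, Finset.mem_univ _⟩⟩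
        exact fun h => hc₀nb (h ▸ hc.2.2)
      have hmemE : cmax ∈ Finset.univ.erase c₀ := Finset.mem_erase.mpr ⟨hcmc₀, Finset.mem_univ _⟩
      have hc := Finset.card_le_card hsub
      rw [Finset.card_erase_of_mem hmemE, Finset.card_erase_of_mem (Finset.mem_univ _),
        Finset.card_univ, Fintype.card_fin] at hc
      omega
    set blocked := s₀.image (fun c => col₀ c (leader hr G C S c ℓmax)) with hbldef
    have hex : ∃ f : Fin (T+1), f ∉ blocked := by
      by_contra hcon
      push_neg at hcon
      have h2 : (Finset.univ : Finset (Fin (T+1))).card ≤ blocked.card :=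
        Finset.card_le_card (fun f _ => hcon f)
      have h3 : blocked.card ≤ s₀.card := Finset.card_image_le
      rw [Finset.card_univ, Fintype.card_fin] at h2
      omega
    obtain ⟨f, hf⟩ := hex
    refine ⟨fun c ℓ => if (c, ℓ) = (cmax, ℓmax) then f else col₀ c ℓ, ?_⟩
    intro c ℓ c' ℓ' hmem hmem' hcne' hcond
    obtain ⟨p, hp, hbc, hlc, hbc', hlc'⟩ := hcond
    -- key claim: if one of the pairs is (cmax, ℓmax), the other's colour is blocked
    have key : ∀ d m, (d, m) ∈ F → d ≠ cmax → Busy G r C S d p → leader hr G C S d p = m →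
        Busy G r C S cmax p → leader hr G C S cmax p = ℓmax →
        col₀ d m ∈ blocked := by
      intro d m hdm hdne hbd hld hbm hlm
      have hm_le : RLe r m ℓmax := by
        rw [← not_lt_iff_rle hr]
        exact hℓmax m ⟨d, hdm⟩
      have hℓmax_le : RLe r ℓmax p := hlm ▸ leader_le hr hp hbm
      have hbusyd : Busy G r C S d ℓmax := by
        have := (leader_segOn hr hp hbd).2.2 ℓmax hℓS (hld ▸ hm_le) hℓmax_le
        exact this
      have hstab : leader hr G C S d ℓmax = m := by
        rw [← hld]
        exact leader_stable hr hp hbd hℓS (hld ▸ hm_le) hℓmax_le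
      rw [hbldef]
      refine Finset.mem_image.mpr ⟨d, ?_, by rw [hstab]⟩
      rw [hs₀def, Finset.mem_filter]
      exact ⟨Finset.mem_univ _, hdne, hbusyd⟩
    by_cases h1 : (c, ℓ) = (cmax, ℓmax) <;> by_cases h2 : (c', ℓ') = (cmax, ℓmax)
    · exfalso
      have e1 : c = cmax := (Prod.mk.injEq _ _ _ _ ▸ h1).1
      have e2 : c' = cmax := (Prod.mk.injEq _ _ _ _ ▸ h2).1
      exact hcne' (e1.trans e2.symm)
    · simp only [if_pos h1, if_neg h2]
      have e1 : c = cmax := (Prod.mk.injEq _ _ _ _ ▸ h1).1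
      have e1' : ℓ = ℓmax := (Prod.mk.injEq _ _ _ _ ▸ h1).2
      have hbl : col₀ c' ℓ' ∈ blocked :=
        key c' ℓ' hmem' (fun h => hcne' (h ▸ e1 ▸ rfl)) hbc' hlc' (e1 ▸ hbc) (e1 ▸ e1' ▸ hlc)
      exact fun h => hf (h ▸ hbl)
    · simp only [if_neg h1, if_pos h2]
      have e2 : c' = cmax := (Prod.mk.injEq _ _ _ _ ▸ h2).1
      have e2' : ℓ' = ℓmax := (Prod.mk.injEq _ _ _ _ ▸ h2).2
      have hbl : col₀ c ℓ ∈ blocked :=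
        key c ℓ hmem (fun h => hcne' (h ▸ e2 ▸ rfl)) hbc hlc (e2 ▸ hbc') (e2 ▸ e2' ▸ hlc')
      exact fun h => hf (h ▸ hbl)
    · simp only [if_neg h1, if_neg h2]
      exact hcol₀ _ _ _ _ (Finset.mem_erase.mpr ⟨h1, hmem⟩) (Finset.mem_erase.mpr ⟨h2, hmem'⟩)
        hcne' ⟨p, hp, hbc, hlc, hbc', hlc'⟩
  · refine ⟨col₀, ?_⟩
    intro c ℓ c' ℓ' hmem hmem' hcne' hcond
    obtain ⟨p, hp, hbc, hlc, hbc', hlc'⟩ := hcond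
    have hmem1 : (c, ℓ) ∈ F.erase (cmax, ℓmax) := by
      refine Finset.mem_erase.mpr ⟨?_, hmem⟩
      intro h
      have e1 : c = cmax := (Prod.mk.injEq _ _ _ _ ▸ h).1
      have e1' : ℓ = ℓmax := (Prod.mk.injEq _ _ _ _ ▸ h).2
      exact hreal ⟨p, hp, e1 ▸ hbc, e1 ▸ e1' ▸ hlc⟩
    have hmem2 : (c', ℓ') ∈ F.erase (cmax, ℓmax) := by
      refine Finset.mem_erase.mpr ⟨?_, hmem'⟩
      intro h
      have e2 : c' = cmax := (Prod.mk.injEq _ _ _ _ ▸ h).1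
      have e2' : ℓ' = ℓmax := (Prod.mk.injEq _ _ _ _ ▸ h).2
      exact hreal ⟨p, hp, e2 ▸ hbc', e2 ▸ e2' ▸ hlc'⟩
    exact hcol₀ _ _ _ _ hmem1 hmem2 hcne' ⟨p, hp, hbc, hlc, hbc', hlc'⟩
end Coloring


section W2
variable {r : V → V → Prop}

lemma sto_subtype (hr : IsStrictTotalOrder V r) (S : Set V) :
    IsStrictTotalOrder ↥S (fun a b => r ↑a ↑b) where
  trichotomous := fun a b => by
    rcases sto_tricho hr ↑a ↑b with h | h | h
    · exact fun h1 _ => absurd h h1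
    · exact fun _ _ => Subtype.ext h
    · exact fun _ h2 => absurd h h2
  irrefl := fun a => sto_irrefl hr ↑a
  trans := fun _ _ _ h1 h2 => sto_trans hr h1 h2

lemma exists_full_cut [Finite V] (G : SimpleGraph V) (hr : IsStrictTotalOrder V r)
    {t : ℕ} (C : V → Fin t) (hC : Consistent G r C) (S : Set V)
    (hthin : ¬ IsKThin (G.induce S) (t - 1)) :
    ∃ m, m ∈ S ∧ ∀ c : Fin t, C m = c ∨ Busy G r C S c m := by
  classical
  by_contra hcon
  push_neg at hcon
  apply hthin
  rcases Nat.lt_or_ge t 2 with hlt | hge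
  · -- degenerate small cases
    interval_cases t
    · exact ⟨fun a b => r ↑a ↑b, sto_subtype hr S, fun x => C ↑x,
        fun u v y h1 h2 hc hadj => by
          have : G.Adj ↑v ↑y := hC ↑u ↑v ↑y h1 h2 hc hadj
          exact this⟩
    · rcases Set.eq_empty_or_nonempty S with rfl | ⟨m, hm⟩
      · refine ⟨fun a b => r ↑a ↑b, sto_subtype hr _, fun x => absurd x.2 (Set.notMem_empty _),
          fun u => absurd u.2 (Set.notMem_empty _)⟩
      · obtain ⟨c, hne, -⟩ := hcon m hm
        exact absurd (Subsingleton.elim _ _) hne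
  · obtain ⟨T, hT⟩ : ∃ T, t = T + 2 := ⟨t - 2, by omega⟩
    have hbound : ∀ p ∈ S, ∃ c, C p ≠ c ∧ ¬ Busy G r C S c p := fun p hp => hcon p hp
    obtain ⟨col, hcol⟩ := seg_coloring hr G C S hT hbound
    have hfresh : ∀ p, p ∈ S → ¬ Busy G r C S (C p) p →
        ∃ f : Fin (T+1), ∀ c, Busy G r C S c p → f ≠ col c (leader hr G C S c p) := by
      intro p hp hnb
      obtain ⟨c₀, hc₀ne, hc₀nb⟩ := hbound p hp
      haveI : Fintype V := Fintype.ofFinite V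
      set s₀ : Finset (Fin t) := Finset.univ.filter (fun c => Busy G r C S c p) with hs₀def
      have hs₀card : s₀.card ≤ T := by
        have hsub : s₀ ⊆ (Finset.univ.erase c₀).erase (C p) := by
          intro c hc
          rw [hs₀def, Finset.mem_filter] at hc
          refine Finset.mem_erase.mpr ⟨fun h => hnb (h ▸ hc.2),
            Finset.mem_erase.mpr ⟨fun h => hc₀nb (h ▸ hc.2), Finset.mem_univ _⟩⟩
        have hmemE : C p ∈ Finset.univ.erase c₀ := Finset.mem_erase.mpr ⟨hc₀ne, Finset.mem_univ _⟩
        have hcard := Finset.card_le_card hsub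
        rw [Finset.card_erase_of_mem hmemE, Finset.card_erase_of_mem (Finset.mem_univ _),
          Finset.card_univ, Fintype.card_fin] at hcard
        omega
      set blocked := s₀.image (fun c => col c (leader hr G C S c p)) with hbldef
      have hex : ∃ f : Fin (T+1), f ∉ blocked := by
        by_contra hcon2
        push_neg at hcon2
        have h2 : (Finset.univ : Finset (Fin (T+1))).card ≤ blocked.card :=
          Finset.card_le_card (fun f _ => hcon2 f)
        have h3 : blocked.card ≤ s₀.card := Finset.card_image_le
        rw [Finset.card_univ, Fintype.card_fin] at h2
        omega
      obtain ⟨f, hf⟩ := hex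
      refine ⟨f, fun c hbc hfe => hf ?_⟩
      rw [hbldef, hfe]
      refine Finset.mem_image.mpr ⟨c, ?_, rfl⟩
      rw [hs₀def]
      exact Finset.mem_filter.mpr ⟨Finset.mem_univ _, hbc⟩
    have ht1 : t - 1 = T + 1 := by omega
    rw [ht1]
    refine ⟨fun a b => r ↑a ↑b, sto_subtype hr S,
      fun x => if h : Busy G r C S (C ↑x) ↑x then col (C ↑x) (leader hr G C S (C ↑x) ↑x)
        else Classical.choose (hfresh ↑x x.2 h), ?_⟩
    intro u v y h1 h2 hCuv hadj
    have hGadj : G.Adj ↑u ↑y := hadj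
    have hbuv : Busy G r C S (C ↑u) ↑v := ⟨↑u, ↑y, u.2, y.2, hGadj, Or.inl h1, h2, rfl⟩
    have hbu : Busy G r C S (C ↑u) ↑u :=
      ⟨↑u, ↑y, u.2, y.2, hGadj, RLe.refl _, sto_trans hr h1 h2, rfl⟩
    have hseguv : SegOn G r C S (C ↑u) ↑u ↑v :=
      ⟨u.2, Or.inl h1, fun q hq ha hb => ⟨↑u, ↑y, u.2, y.2, hGadj, ha, rle_trans_lt hr hb h2, rfl⟩⟩
    have hminv : RLe r (leader hr G C S (C ↑u) ↑v) ↑u := leader_min hr v.2 hbuv hseguv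
    have hL : leader hr G C S (C ↑u) ↑u = leader hr G C S (C ↑u) ↑v :=
      leader_stable hr v.2 hbuv u.2 hminv (Or.inl h1)
    dsimp only at hCuv
    rw [dif_pos hbu] at hCuv
    by_cases hv : Busy G r C S (C ↑v) ↑v
    · rw [dif_pos hv] at hCuv
      by_cases hcc : C ↑u = C ↑v
      · exact hC ↑u ↑v ↑y h1 h2 hcc hGadj
      · exfalso
        apply hcol ↑v v.2 (C ↑u) (C ↑v) hbuv hv hcc
        rw [← hL, hCuv]
    · exfalso
      rw [dif_neg hv] at hCuv
      have := Classical.choose_spec (hfresh ↑v v.2 hv) (C ↑u) hbuv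
      rw [← hL] at this
      exact this hCuv.symm
end W2


section ThinBasics

lemma isKThin_card_s2 [Fintype V] (G : SimpleGraph V) : IsKThin G (Fintype.card V) := by
  let e := Fintype.equivFin V
  refine ⟨fun a b => e a < e b, ?_, fun v => e v, ?_⟩
  · exact {
      trichotomous := fun a b => by
        rcases lt_trichotomy (e a) (e b) with h | h | h
        · exact fun h1 _ => absurd h h1
        · exact fun _ _ => e.injective h
        · exact fun _ h2 => absurd h h2
      irrefl := fun a => lt_irrefl _
      trans := fun _ _ _ h1 h2 => lt_trans h1 h2 }
  · intro a b c h1 h2 hc _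
    have hab : a = b := e.injective hc
    subst hab
    exact absurd h1 (lt_irrefl _)

lemma thinness_isKThin [Fintype V] (G : SimpleGraph V) : IsKThin G (Thinness G) :=
  Nat.sInf_mem (s := {k | IsKThin G k}) ⟨_, isKThin_card_s2 G⟩

lemma isKThin_induce {G : SimpleGraph V} {t : ℕ} (S : Set V) (h : IsKThin G t) :
    IsKThin (G.induce S) t := by
  obtain ⟨r, hr, C, hC⟩ := h
  exact ⟨fun a b => r ↑a ↑b, sto_subtype hr S, fun x => C ↑x,
    fun a b c h1 h2 hc hadj => hC ↑a ↑b ↑c h1 h2 hc hadj⟩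

lemma thinness_induce_le [Fintype V] (G : SimpleGraph V) (S : Set V) :
    Thinness (G.induce S) ≤ Thinness G :=
  Nat.sInf_le (isKThin_induce S (thinness_isKThin G))

lemma thinness_pos [Fintype V] (G : SimpleGraph V) (v : V) : 1 ≤ Thinness G := by
  by_contra h
  push_neg at h
  have h0 : Thinness G = 0 := by omega
  obtain ⟨r, hr, C, hC⟩ := thinness_isKThin G
  rw [h0] at C
  exact (C v).elim0
end ThinBasics

section Plumb

def Sset (G : SimpleGraph V) (v u : V) : Set V :=
  ((G.deleteEdges {s(v,u)}).connectedComponentMk u).supp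

lemma mem_Sset {G : SimpleGraph V} {v u x : V} :
    x ∈ Sset G v u ↔ (G.deleteEdges {s(v,u)}).Reachable x u := by
  simp [Sset, ConnectedComponent.mem_supp_iff, ConnectedComponent.eq]

lemma u_mem_Sset {G : SimpleGraph V} {v u : V} : u ∈ Sset G v u :=
  mem_Sset.mpr (Reachable.refl u)

lemma del_adj {G : SimpleGraph V} {v u a b : V} (hab : G.Adj a b)
    (h1 : ¬(a = v ∧ b = u)) (h2 : ¬(a = u ∧ b = v)) :
    (G.deleteEdges {s(v,u)}).Adj a b := by
  rw [deleteEdges_adj]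
  refine ⟨hab, ?_⟩
  simp only [Set.mem_singleton_iff, Sym2.eq_iff]
  tauto

variable {G : SimpleGraph V} {w v u : V}

lemma bridge_not_reach (hac : G.IsAcyclic) (hvu : G.Adj v u) :
    ¬ (G.deleteEdges {s(v,u)}).Reachable v u := by
  have hb := (isAcyclic_iff_forall_adj_isBridge.mp hac) hvu
  rw [isBridge_iff] at hb
  exact hb

lemma v_notin_Sset (hac : G.IsAcyclic) (hvu : G.Adj v u) : v ∉ Sset G v u :=
  fun h => bridge_not_reach hac hvu (mem_Sset.mp h)

lemma w_notin_Sset (hac : G.IsAcyclic) (hwv : G.Adj w v) (hvu : G.Adj v u) (huw : u ≠ w) :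
    w ∉ Sset G v u := by
  intro h
  apply bridge_not_reach hac hvu
  have hadj : (G.deleteEdges {s(v,u)}).Adj v w :=
    del_adj hwv.symm (fun hx => huw hx.2.symm) (fun hx => hvu.ne hx.1)
  exact hadj.reachable.trans (mem_Sset.mp h)

lemma not_adj_w_Sset (hac : G.IsAcyclic) (hwv : G.Adj w v) (hvu : G.Adj v u) (huw : u ≠ w) :
    ∀ x ∈ Sset G v u, ¬ G.Adj w x := by
  intro x hx hadj
  apply w_notin_Sset hac hwv hvu huw
  rw [mem_Sset]
  have hadj' : (G.deleteEdges {s(v,u)}).Adj w x :=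
    del_adj hadj (fun hx' => hwv.ne hx'.1) (fun hx' => huw hx'.1.symm)
  exact hadj'.reachable.trans (mem_Sset.mp hx)

lemma not_adj_v_Sset (hac : G.IsAcyclic) (hvu : G.Adj v u) :
    ∀ x ∈ Sset G v u, x ≠ u → ¬ G.Adj v x := by
  intro x hx hxu hadj
  apply v_notin_Sset hac hvu
  rw [mem_Sset]
  have hadj' : (G.deleteEdges {s(v,u)}).Adj v x :=
    del_adj hadj (fun hx' => hxu hx'.2) (fun hx' => hvu.ne hx'.1)
  exact hadj'.reachable.trans (mem_Sset.mp hx)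

variable {v' u' : V}

lemma u_ne_v' (hac : G.IsAcyclic) (hwv : G.Adj w v) (hvu : G.Adj v u) (huw : u ≠ w)
    (hwv' : G.Adj w v') : u ≠ v' := by
  intro h
  exact not_adj_w_Sset hac hwv hvu huw u u_mem_Sset (h ▸ hwv')

lemma v'_notin_Sset (hac : G.IsAcyclic) (hwv : G.Adj w v) (hvu : G.Adj v u) (huw : u ≠ w)
    (hwv' : G.Adj w v') (hvv' : v ≠ v') : v' ∉ Sset G v u := by
  intro h
  apply w_notin_Sset hac hwv hvu huw
  rw [mem_Sset]
  have hadj : (G.deleteEdges {s(v,u)}).Adj w v' :=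
    del_adj hwv' (fun hx => hwv.ne hx.1) (fun hx => huw hx.1.symm)
  exact hadj.reachable.trans (mem_Sset.mp h)

lemma not_adj_v'_Sset (hac : G.IsAcyclic) (hwv : G.Adj w v) (hvu : G.Adj v u) (huw : u ≠ w)
    (hwv' : G.Adj w v') (hvv' : v ≠ v') : ∀ x ∈ Sset G v u, ¬ G.Adj v' x := by
  intro x hx hadj
  apply v'_notin_Sset hac hwv hvu huw hwv' hvv'
  rw [mem_Sset]
  have hadj' : (G.deleteEdges {s(v,u)}).Adj v' x :=
    del_adj hadj (fun hx' => hvv' hx'.1.symm)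
      (fun hx' => u_ne_v' hac hwv hvu huw hwv' hx'.1.symm)
  exact hadj'.reachable.trans (mem_Sset.mp hx)

lemma Sset_disjoint (hac : G.IsAcyclic) (hwv : G.Adj w v) (hvu : G.Adj v u) (huw : u ≠ w)
    (hwv' : G.Adj w v') (hvu' : G.Adj v' u') (huw' : u' ≠ w) (hvv' : v ≠ v') :
    ∀ x, x ∈ Sset G v u → x ∈ Sset G v' u' → False := by
  classical
  intro x hx hx'
  obtain ⟨p⟩ := mem_Sset.mp hx'
  have hsupp : ∀ z ∈ p.support, z ∈ Sset G v' u' :=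
    fun z hz => mem_Sset.mpr ⟨p.dropUntil z hz⟩
  have hvS' : v ∉ Sset G v' u' :=
    v'_notin_Sset hac hwv' hvu' huw' hwv (fun h => hvv' h.symm)
  have hnoe : s(v,u) ∉ p.edges :=
    fun he => hvS' (hsupp v (Walk.fst_mem_support_of_mem_edges p he))
  have hedges : ∀ e' ∈ p.edges, e' ∈ (G.deleteEdges {s(v,u)}).edgeSet := by
    intro e' he'
    have h1 : e' ∈ (G.deleteEdges {s(v',u')}).edgeSet := p.edges_subset_edgeSet he'
    rw [edgeSet_deleteEdges] at h1 ⊢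
    refine ⟨h1.1, fun h => hnoe ?_⟩
    rw [Set.mem_singleton_iff] at h
    rwa [h] at he'
  have q := p.transfer (G.deleteEdges {s(v,u)}) hedges
  have hadj1 : (G.deleteEdges {s(v,u)}).Adj w v' :=
    del_adj hwv' (fun hx' => hwv.ne hx'.1) (fun hx' => huw hx'.1.symm)
  have hadj2 : (G.deleteEdges {s(v,u)}).Adj v' u' :=
    del_adj hvu' (fun hx' => hvv' hx'.1.symm)
      (fun hx' => u_ne_v' hac hwv hvu huw hwv' hx'.1.symm)
  apply w_notin_Sset hac hwv hvu huw
  rw [mem_Sset]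
  exact (hadj1.reachable.trans (hadj2.reachable.trans (⟨q.reverse⟩ :
    (G.deleteEdges {s(v,u)}).Reachable u' x))).trans (mem_Sset.mp hx)

lemma not_adj_Sset_Sset (hac : G.IsAcyclic) (hwv : G.Adj w v) (hvu : G.Adj v u) (huw : u ≠ w)
    (hwv' : G.Adj w v') (hvu' : G.Adj v' u') (huw' : u' ≠ w) (hvv' : v ≠ v') :
    ∀ x ∈ Sset G v u, ∀ x' ∈ Sset G v' u', ¬ G.Adj x x' := by
  intro x hx x' hx' hadj
  have hvS : v ∉ Sset G v u := v_notin_Sset hac hvu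
  have hvS' : v ∉ Sset G v' u' :=
    v'_notin_Sset hac hwv' hvu' huw' hwv (fun h => hvv' h.symm)
  have hadj' : (G.deleteEdges {s(v,u)}).Adj x x' :=
    del_adj hadj (fun hx'' => hvS (hx''.1 ▸ hx)) (fun hx'' => hvS' (hx''.2 ▸ hx'))
  have : x' ∈ Sset G v u := by
    rw [mem_Sset]
    exact hadj'.symm.reachable.trans (mem_Sset.mp hx)
  exact Sset_disjoint hac hwv hvu huw hwv' hvu' huw' hvv' x' this hx'
end Plumb

section Endgame
variable {r : V → V → Prop}

lemma walk_cross (hr : IsStrictTotalOrder V r) {G : SimpleGraph V} {m : V} :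
    ∀ {a b : V} (p : G.Walk a b), RLe r a m → r m b →
    ∃ x y, G.Adj x y ∧ x ∈ p.support ∧ y ∈ p.support ∧ RLe r x m ∧ r m y := by
  intro a b p
  induction p with
  | nil =>
    intro h1 h2
    exact absurd (lt_trans_rle hr h2 h1) (sto_irrefl hr m)
  | @cons a a₂ b h q ih =>
    intro h1 h2
    rcases sto_tricho hr m a₂ with hlt | heq | hgt
    · exact ⟨a, a₂, h, by simp [Walk.support_cons],
        by simp [Walk.support_cons, q.start_mem_support], h1, hlt⟩
    · obtain ⟨x, y, hxy, hxs, hys, hx, hy⟩ := ih (Or.inr heq.symm) h2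
      exact ⟨x, y, hxy, by simp [Walk.support_cons, hxs], by simp [Walk.support_cons, hys], hx, hy⟩
    · obtain ⟨x, y, hxy, hxs, hys, hx, hy⟩ := ih (Or.inl hgt) h2
      exact ⟨x, y, hxy, by simp [Walk.support_cons, hxs], by simp [Walk.support_cons, hys], hx, hy⟩

lemma endgame [Finite V] {G : SimpleGraph V} (hac : G.IsAcyclic)
    (hr : IsStrictTotalOrder V r) {t : ℕ} {C : V → Fin t} (hC : Consistent G r C)
    {w v₁ u₁ v₂ u₂ v₃ u₃ : V}
    (hwv₁ : G.Adj w v₁) (hvu₁ : G.Adj v₁ u₁) (hu₁ : u₁ ≠ w)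
    (hwv₂ : G.Adj w v₂) (hvu₂ : G.Adj v₂ u₂) (hu₂ : u₂ ≠ w)
    (hwv₃ : G.Adj w v₃) (hvu₃ : G.Adj v₃ u₃) (hu₃ : u₃ ≠ w)
    (h12 : v₁ ≠ v₂) (h32 : v₃ ≠ v₂)
    {m₁ m₂ m₃ : V} (hm₁ : m₁ ∈ Sset G v₁ u₁) (hm₂ : m₂ ∈ Sset G v₂ u₂)
    (hm₃ : m₃ ∈ Sset G v₃ u₃)
    (hord₁ : r m₁ m₂) (hord₂ : r m₂ m₃)
    (hfull : ∀ c : Fin t, C m₂ = c ∨ Busy G r C (Sset G v₂ u₂) c m₂) : False := by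
  classical
  obtain ⟨p₁⟩ : (G.deleteEdges {s(v₁,u₁)}).Reachable m₁ u₁ := mem_Sset.mp hm₁
  obtain ⟨p₃⟩ : (G.deleteEdges {s(v₃,u₃)}).Reachable u₃ m₃ := (mem_Sset.mp hm₃).symm
  have hsub1 : ∀ e ∈ p₁.edges, e ∈ G.edgeSet := by
    intro e he
    have h' := p₁.edges_subset_edgeSet he
    rw [edgeSet_deleteEdges] at h'
    exact h'.1
  have hsub3 : ∀ e ∈ p₃.edges, e ∈ G.edgeSet := by
    intro e he
    have h' := p₃.edges_subset_edgeSet he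
    rw [edgeSet_deleteEdges] at h'
    exact h'.1
  set q₁ := p₁.transfer G hsub1 with hq₁def
  set q₃ := p₃.transfer G hsub3 with hq₃def
  set W : G.Walk m₁ m₃ :=
    q₁.append (Walk.cons hvu₁.symm (Walk.cons hwv₁.symm (Walk.cons hwv₃ (Walk.cons hvu₃ q₃))))
    with hWdef
  -- the predicate describing membership in D
  have hWsupp : ∀ z ∈ W.support,
      z ∈ Sset G v₁ u₁ ∨ z ∈ Sset G v₃ u₃ ∨ z = v₁ ∨ z = w ∨ z = v₃ := by
    intro z hz
    rw [hWdef, Walk.mem_support_append_iff] at hz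
    rcases hz with hz | hz
    · rw [hq₁def, Walk.support_transfer] at hz
      exact Or.inl (mem_Sset.mpr (Reachable.trans ⟨p₁.dropUntil z hz⟩ (Reachable.refl u₁)))
    · simp only [Walk.support_cons, List.mem_cons] at hz
      rcases hz with rfl | hz
      · exact Or.inl u_mem_Sset
      rcases hz with rfl | hz
      · exact Or.inr (Or.inr (Or.inl rfl))
      rcases hz with rfl | hz
      · exact Or.inr (Or.inr (Or.inr (Or.inl rfl)))
      rcases hz with rfl | hz
      · exact Or.inr (Or.inr (Or.inr (Or.inr rfl)))
      · rw [hq₃def, Walk.support_transfer] at hz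
        exact Or.inr (Or.inl (mem_Sset.mpr (Reachable.trans ⟨p₃.dropUntil z hz⟩
            (mem_Sset.mp hm₃))))
  have hDnotin : ∀ z, (z ∈ Sset G v₁ u₁ ∨ z ∈ Sset G v₃ u₃ ∨ z = v₁ ∨ z = w ∨ z = v₃) →
      z ∉ Sset G v₂ u₂ := by
    intro z hz hzS
    rcases hz with hz | hz | rfl | rfl | rfl
    · exact Sset_disjoint hac hwv₁ hvu₁ hu₁ hwv₂ hvu₂ hu₂ h12 z hz hzS
    · exact Sset_disjoint hac hwv₃ hvu₃ hu₃ hwv₂ hvu₂ hu₂ h32 z hz hzS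
    · exact v'_notin_Sset hac hwv₂ hvu₂ hu₂ hwv₁ (Ne.symm h12) hzS
    · exact w_notin_Sset hac hwv₂ hvu₂ hu₂ hzS
    · exact v'_notin_Sset hac hwv₂ hvu₂ hu₂ hwv₃ (Ne.symm h32) hzS
  have hDnadj : ∀ z, (z ∈ Sset G v₁ u₁ ∨ z ∈ Sset G v₃ u₃ ∨ z = v₁ ∨ z = w ∨ z = v₃) →
      ∀ s ∈ Sset G v₂ u₂, ¬ G.Adj z s := by
    intro z hz s hs
    rcases hz with hz | hz | rfl | rfl | rfl
    · exact fun had => not_adj_Sset_Sset hac hwv₂ hvu₂ hu₂ hwv₁ hvu₁ hu₁ (Ne.symm h12)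
        s hs z hz had.symm
    · exact fun had => not_adj_Sset_Sset hac hwv₂ hvu₂ hu₂ hwv₃ hvu₃ hu₃ (Ne.symm h32)
        s hs z hz had.symm
    · exact not_adj_v'_Sset hac hwv₂ hvu₂ hu₂ hwv₁ (Ne.symm h12) s hs
    · exact not_adj_w_Sset hac hwv₂ hvu₂ hu₂ s hs
    · exact not_adj_v'_Sset hac hwv₂ hvu₂ hu₂ hwv₃ (Ne.symm h32) s hs
  obtain ⟨x, y, hxy, hxs, hys, hx, hy⟩ := walk_cross hr W (Or.inl hord₁) hord₂
  have hPx := hWsupp x hxs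
  have hPy := hWsupp y hys
  have hxlt : r x m₂ := by
    rcases hx with hxlt | rfl
    · exact hxlt
    · exact absurd hm₂ (hDnotin x hPx)
  rcases hfull (C x) with hclass | hbusy
  · have hadj : G.Adj m₂ y := hC x m₂ y hxlt hy hclass.symm hxy
    exact hDnadj y hPy m₂ hm₂ hadj.symm
  · obtain ⟨xw, yw, hxwS, hywS, hadjw, hle, hgt, hCxw⟩ := hbusy
    rcases sto_tricho hr xw x with hlt | heq | hgt2
    · have hadj : G.Adj x yw := hC xw x yw hlt (sto_trans hr hxlt hgt) hCxw hadjw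
      exact hDnadj x hPx yw hywS hadj
    · exact hDnotin x hPx (heq ▸ hxwS)
    · have hadj : G.Adj xw y := hC x xw y hgt2 (rle_trans_lt hr hle hy) hCxw.symm hxy
      exact hDnadj y hPy xw hxwS hadj.symm
end Endgame


theorem saturated_vertex_lower_bound [Fintype V] (G : SimpleGraph V) (hT : G.IsTree)
    (k : ℕ) (w : V) (h : 3 ≤ {v | KNeighbor G k w v}.ncard) :
    k + 1 ≤ Thinness G := by
  classical
  by_contra hcon
  push_neg at hcon
  have hac : G.IsAcyclic := hT.IsAcyclic
  have hfin : {v | KNeighbor G k w v}.Finite := Set.toFinite _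
  rw [Set.ncard_eq_toFinset_card _ hfin] at h
  obtain ⟨v₁, v₂, v₃, hv₁, hv₂, hv₃, h12, h13, h23⟩ :=
    Finset.two_lt_card_iff.mp (by omega : 2 < hfin.toFinset.card)
  rw [Set.Finite.mem_toFinset] at hv₁ hv₂ hv₃
  obtain ⟨hwv₁, u₁, hvu₁, hu₁, hk₁⟩ := hv₁
  obtain ⟨hwv₂, u₂, hvu₂, hu₂, hk₂⟩ := hv₂
  obtain ⟨hwv₃, u₃, hvu₃, hu₃, hk₃⟩ := hv₃
  have htpos : 1 ≤ Thinness G := thinness_pos G w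
  have htk : Thinness G ≤ k := by omega
  have hnthin : ∀ (v u : V), k ≤ DanglingThin G v u →
      ¬ IsKThin (G.induce (Sset G v u)) (Thinness G - 1) := by
    intro v u hk' hkt
    have h1 : Thinness (G.induce (Sset G v u)) ≤ Thinness G - 1 := Nat.sInf_le hkt
    have h2 : k ≤ Thinness (G.induce (Sset G v u)) := hk'
    omega
  obtain ⟨r, hr, C, hC⟩ := thinness_isKThin G
  obtain ⟨m₁, hm₁, hfull₁⟩ := exists_full_cut G hr C hC (Sset G v₁ u₁) (hnthin v₁ u₁ hk₁)
  obtain ⟨m₂, hm₂, hfull₂⟩ := exists_full_cut G hr C hC (Sset G v₂ u₂) (hnthin v₂ u₂ hk₂)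
  obtain ⟨m₃, hm₃, hfull₃⟩ := exists_full_cut G hr C hC (Sset G v₃ u₃) (hnthin v₃ u₃ hk₃)
  rcases sto_tricho hr m₁ m₂ with o12 | oeq | o21
  · rcases sto_tricho hr m₂ m₃ with o23 | oeq | o32
    · exact endgame hac hr hC hwv₁ hvu₁ hu₁ hwv₂ hvu₂ hu₂ hwv₃ hvu₃ hu₃
        h12 (Ne.symm h23) hm₁ hm₂ hm₃ o12 o23 hfull₂
    · exact Sset_disjoint hac hwv₂ hvu₂ hu₂ hwv₃ hvu₃ hu₃ h23 m₂ hm₂ (oeq ▸ hm₃)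
    · rcases sto_tricho hr m₁ m₃ with o13 | oeq | o31
      · exact endgame hac hr hC hwv₁ hvu₁ hu₁ hwv₃ hvu₃ hu₃ hwv₂ hvu₂ hu₂
          h13 h23 hm₁ hm₃ hm₂ o13 o32 hfull₃
      · exact Sset_disjoint hac hwv₁ hvu₁ hu₁ hwv₃ hvu₃ hu₃ h13 m₁ hm₁ (oeq ▸ hm₃)
      · exact endgame hac hr hC hwv₃ hvu₃ hu₃ hwv₁ hvu₁ hu₁ hwv₂ hvu₂ hu₂
          (Ne.symm h13) (Ne.symm h12) hm₃ hm₁ hm₂ o31 o12 hfull₁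
  · exact Sset_disjoint hac hwv₁ hvu₁ hu₁ hwv₂ hvu₂ hu₂ h12 m₁ hm₁ (oeq ▸ hm₂)
  · rcases sto_tricho hr m₁ m₃ with o13 | oeq | o31
    · exact endgame hac hr hC hwv₂ hvu₂ hu₂ hwv₁ hvu₁ hu₁ hwv₃ hvu₃ hu₃
        (Ne.symm h12) (Ne.symm h13) hm₂ hm₁ hm₃ o21 o13 hfull₁
    · exact Sset_disjoint hac hwv₁ hvu₁ hu₁ hwv₃ hvu₃ hu₃ h13 m₁ hm₁ (oeq ▸ hm₃)
    · rcases sto_tricho hr m₂ m₃ with o23 | oeq | o32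
      · exact endgame hac hr hC hwv₂ hvu₂ hu₂ hwv₃ hvu₃ hu₃ hwv₁ hvu₁ hu₁
          h23 h13 hm₂ hm₃ hm₁ o23 o31 hfull₃
      · exact Sset_disjoint hac hwv₂ hvu₂ hu₂ hwv₃ hvu₃ hu₃ h23 m₂ hm₂ (oeq ▸ hm₃)
      · exact endgame hac hr hC hwv₃ hvu₃ hu₃ hwv₂ hvu₂ hu₂ hwv₁ hvu₁ hu₁
          (Ne.symm h23) h12 hm₃ hm₂ hm₁ o32 o21 hfull₂
end

section
/- Let T be a tree with t ≥ 2 almost-leaves. Then thin(T) ≤ t − 1. -/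
open SimpleGraph

variable {V : Type*}

def IsLeaf (G : SimpleGraph V) (v : V) : Prop := (G.neighborSet v).ncard = 1

def IsAlmostLeaf (G : SimpleGraph V) (v : V) : Prop :=
  ¬ IsLeaf G v ∧ {u | G.Adj v u ∧ ¬ IsLeaf G u}.ncard ≤ 1

namespace TreeThinAux

variable {V : Type*}

/-- `y` lies between `x` and `z` (metrically). -/
def Btw (G : SimpleGraph V) (x y z : V) : Prop := G.dist x y + G.dist y z = G.dist x z

variable {G : SimpleGraph V}

lemma dcomm (G : SimpleGraph V) (x y : V) : G.dist x y = G.dist y x := SimpleGraph.dist_comm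

lemma path_length_eq_dist (hT : G.IsTree) {u v : V} (p : G.Walk u v) (hp : p.IsPath) :
    p.length = G.dist u v := by
  obtain ⟨q, hq⟩ := hT.isConnected.exists_walk_length_eq_dist u v
  have hq' : q.IsPath := q.isPath_of_length_eq_dist hq
  have := (hT.existsUnique_path u v).unique hp hq'
  rw [this, hq]

lemma support_btw (hT : G.IsTree) {u v : V} {p : G.Walk u v} (hp : p.IsPath) {y : V}
    (hy : y ∈ p.support) : Btw G u y v := by
  classical
  have hsp := p.take_spec hy
  have h1 : (p.takeUntil y hy).IsPath := hp.takeUntil hy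
  have h2 : (p.dropUntil y hy).IsPath := hp.dropUntil hy
  have hl : (p.takeUntil y hy).length + (p.dropUntil y hy).length = p.length := by
    rw [← Walk.length_append, hsp]
  rw [Btw, ← path_length_eq_dist hT _ h1, ← path_length_eq_dist hT _ h2, hl,
    path_length_eq_dist hT p hp]

lemma btw_support (hT : G.IsTree) {u v y : V} (h : Btw G u y v) {p : G.Walk u v}
    (hp : p.IsPath) : y ∈ p.support := by
  obtain ⟨p₁, hp₁⟩ := hT.isConnected.exists_walk_length_eq_dist u y
  obtain ⟨p₂, hp₂⟩ := hT.isConnected.exists_walk_length_eq_dist y v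
  have hW : (p₁.append p₂).length = G.dist u v := by
    rw [Walk.length_append, hp₁, hp₂, h]
  have hWp : (p₁.append p₂).IsPath := (p₁.append p₂).isPath_of_length_eq_dist hW
  have := (hT.existsUnique_path u v).unique hWp hp
  rw [← this]
  rw [Walk.mem_support_append_iff]
  exact Or.inl p₁.end_mem_support

/-- existence of the parent step towards a root. -/
lemma exists_parent (hT : G.IsTree) {r v : V} (hne : v ≠ r) :
    ∃ x, G.Adj v x ∧ G.dist r x + 1 = G.dist r v := by
  have hd : G.dist v r ≠ 0 := by
    simp [hT.isConnected.dist_eq_zero_iff, hne]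
  obtain ⟨p, hp⟩ := hT.isConnected.exists_walk_length_eq_dist v r
  cases p with
  | nil => exact absurd SimpleGraph.dist_self hd
  | cons h q =>
      rename_i x
      refine ⟨x, h, ?_⟩
      have h1 : G.dist x r ≤ q.length := dist_le q
      have h2 : G.dist v r ≤ 1 + G.dist x r := by
        have := hT.isConnected.dist_triangle (u := v) (v := x) (w := r)
        have hadj : G.dist v x = 1 := by rw [dist_eq_one_iff_adj]; exact h
        omega
      simp only [Walk.length_cons] at hp
      rw [dcomm G r x, dcomm G r v]
      omega

lemma parent_unique (hT : G.IsTree) {r v x₁ x₂ : V}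
    (h₁ : G.Adj v x₁) (hd₁ : G.dist r x₁ + 1 = G.dist r v)
    (h₂ : G.Adj v x₂) (hd₂ : G.dist r x₂ + 1 = G.dist r v) : x₁ = x₂ := by
  classical
  obtain ⟨p₁, hp₁len⟩ := hT.isConnected.exists_walk_length_eq_dist x₁ r
  obtain ⟨p₂, hp₂len⟩ := hT.isConnected.exists_walk_length_eq_dist x₂ r
  have hp₁ : p₁.IsPath := p₁.isPath_of_length_eq_dist hp₁len
  have hp₂ : p₂.IsPath := p₂.isPath_of_length_eq_dist hp₂len
  have hv₁ : v ∉ p₁.support := by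
    intro hv
    have hb := support_btw hT hp₁ hv
    rw [Btw] at hb
    have : G.dist x₁ v ≠ 0 := by
      simp [hT.isConnected.dist_eq_zero_iff]
      exact fun he => G.irrefl (he ▸ h₁)
    rw [dcomm G r x₁, dcomm G r v] at hd₁
    omega
  have hv₂ : v ∉ p₂.support := by
    intro hv
    have hb := support_btw hT hp₂ hv
    rw [Btw] at hb
    have : G.dist x₂ v ≠ 0 := by
      simp [hT.isConnected.dist_eq_zero_iff]
      exact fun he => G.irrefl (he ▸ h₂)
    rw [dcomm G r x₂, dcomm G r v] at hd₂
    omega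
  have hW₁ : (Walk.cons h₁ p₁).IsPath := hp₁.cons hv₁
  have hW₂ : (Walk.cons h₂ p₂).IsPath := hp₂.cons hv₂
  have := (hT.existsUnique_path v r).unique hW₁ hW₂
  have := congrArg (fun w => w.getVert 1) this
  simpa using this

/-- adjacency dichotomy w.r.t. a root. -/
lemma adj_dichot (hT : G.IsTree) {r v x : V} (h : G.Adj v x) :
    G.dist r v = G.dist r x + 1 ∨ G.dist r x = G.dist r v + 1 := by
  obtain ⟨p, hplen⟩ := hT.isConnected.exists_walk_length_eq_dist x r
  have hp : p.IsPath := p.isPath_of_length_eq_dist hplen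
  by_cases hv : v ∈ p.support
  · right
    have hb := support_btw hT hp hv
    rw [Btw] at hb
    have hxv : G.dist x v = 1 := by rw [dist_eq_one_iff_adj]; exact h.symm
    rw [dcomm G r x, dcomm G r v]
    omega
  · left
    have hW : (Walk.cons h p).IsPath := hp.cons hv
    have := path_length_eq_dist hT _ hW
    simp only [Walk.length_cons] at this
    rw [dcomm G r v, dcomm G r x]
    omega

/-- comparability of two points between `u` and `v`. -/
lemma cmp_btw (hT : G.IsTree) {u v x y : V} (hx : Btw G u x v) (hy : Btw G u y v) :
    Btw G u y x ∨ Btw G x y v := by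
  classical
  obtain ⟨p, hplen⟩ := hT.isConnected.exists_walk_length_eq_dist u v
  have hp : p.IsPath := p.isPath_of_length_eq_dist hplen
  have hxs : x ∈ p.support := btw_support hT hx hp
  have hys : y ∈ p.support := btw_support hT hy hp
  rw [← p.take_spec hxs, Walk.mem_support_append_iff] at hys
  rcases hys with hys | hys
  · exact Or.inl (support_btw hT (hp.takeUntil hxs) hys)
  · exact Or.inr (support_btw hT (hp.dropUntil hxs) hys)


/-! ### Subset layer -/

def ConnOn (G : SimpleGraph V) (S : Set V) : Prop :=
  ∀ u ∈ S, ∀ v ∈ S, ∃ p : G.Walk u v, ∀ x ∈ p.support, x ∈ S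

def Nbr (G : SimpleGraph V) (S : Set V) (v : V) : Set V := {u ∈ S | G.Adj v u}

def leafOn (G : SimpleGraph V) (S : Set V) (v : V) : Prop := (Nbr G S v).ncard = 1

def ALon (G : SimpleGraph V) (S : Set V) : Set V :=
  {v ∈ S | ¬ leafOn G S v ∧ {u ∈ Nbr G S v | ¬ leafOn G S u}.ncard ≤ 1}

def Good (G : SimpleGraph V) (S : Set V) (k : ℕ) : Prop :=
  ∃ f C : V → ℕ, Set.InjOn f S ∧ (∀ v ∈ S, C v < k) ∧
    ∀ u ∈ S, ∀ v ∈ S, ∀ w ∈ S, f u < f v → f v < f w → C u = C v → G.Adj u w → G.Adj v w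

lemma path_in_S (hT : G.IsTree) {S : Set V} (hS : ConnOn G S) {u v : V} (hu : u ∈ S)
    (hv : v ∈ S) {p : G.Walk u v} (hp : p.IsPath) : ∀ x ∈ p.support, x ∈ S := by
  classical
  obtain ⟨w, hw⟩ := hS u hu v hv
  have h1 : (w.toPath : G.Walk u v).IsPath := w.toPath.2
  have := (hT.existsUnique_path u v).unique hp h1
  rw [this]
  intro x hx
  exact hw x (w.support_toPath_subset hx)

lemma btw_mem (hT : G.IsTree) {S : Set V} (hS : ConnOn G S) {u v y : V} (hu : u ∈ S)
    (hv : v ∈ S) (h : Btw G u y v) : y ∈ S := by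
  obtain ⟨p, hplen⟩ := hT.isConnected.exists_walk_length_eq_dist u v
  have hp : p.IsPath := p.isPath_of_length_eq_dist hplen
  exact path_in_S hT hS hu hv hp y (btw_support hT h hp)

lemma good_mono {S : Set V} {k k' : ℕ} (hk : k ≤ k') (h : Good G S k) : Good G S k' := by
  obtain ⟨f, C, h1, h2, h3⟩ := h
  exact ⟨f, C, h1, fun v hv => lt_of_lt_of_le (h2 v hv) hk, h3⟩

lemma good_bounded [Fintype V] {S : Set V} {k : ℕ} (h : Good G S k) :
    ∃ f C : V → ℕ, Set.InjOn f S ∧ (∀ v ∈ S, f v < S.ncard) ∧ (∀ v ∈ S, C v < k) ∧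
      ∀ u ∈ S, ∀ v ∈ S, ∀ w ∈ S, f u < f v → f v < f w → C u = C v → G.Adj u w → G.Adj v w := by
  classical
  obtain ⟨f, C, h1, h2, h3⟩ := h
  set f' : V → ℕ := fun v => (S ∩ {u | f u < f v}).ncard with hf'
  have mono : ∀ u ∈ S, ∀ v ∈ S, f u < f v → f' u < f' v := by
    intro u hu v hv huv
    refine Set.ncard_lt_ncard ⟨fun x hx => ⟨hx.1, lt_trans hx.2 huv⟩, fun hsub => ?_⟩
      (Set.toFinite _)
    exact lt_irrefl (f u) (hsub ⟨hu, huv⟩).2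
  have rev : ∀ u ∈ S, ∀ v ∈ S, f' u < f' v → f u < f v := by
    intro u hu v hv huv
    by_contra hle
    push_neg at hle
    have : (S ∩ {x | f x < f v}) ⊆ (S ∩ {x | f x < f u}) := by
      intro x hx
      exact ⟨hx.1, lt_of_lt_of_le hx.2 hle⟩
    have hle2 := Set.ncard_le_ncard this (Set.toFinite _)
    simp only [hf'] at huv
    omega
  refine ⟨f', C, ?_, ?_, h2, ?_⟩
  · intro u hu v hv he
    by_contra hne
    have hf : f u ≠ f v := fun h => hne (h1 hu hv h)
    rcases hf.lt_or_gt with h' | h'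
    · exact absurd he (ne_of_lt (mono u hu v hv h'))
    · exact absurd he.symm (ne_of_lt (mono v hv u hu h'))
  · intro v hv
    refine Set.ncard_lt_ncard ⟨Set.inter_subset_left, fun hsub => ?_⟩ (Set.toFinite _)
    exact lt_irrefl (f v) (hsub hv).2
  · intro u hu v hv w hw h4 h5 h6 h7
    exact h3 u hu v hv w hw (rev u hu v hv h4) (rev v hv w hw h5) h6 h7

/-- In a maximal position among non-leaves of a "downward closed" set, we find an almost-leaf. -/
lemma farthest_AL [Fintype V] (hT : G.IsTree) {S : Set V} (hS : ConnOn G S) {W : Set V}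
    (hWS : W ⊆ S) {r : V}
    (hcl : ∀ v ∈ W, ∀ x ∈ S, G.Adj v x → G.dist r x = G.dist r v + 1 → x ∈ W)
    (hne : ∃ v ∈ W, ¬ leafOn G S v) :
    ∃ v ∈ W, v ∈ ALon G S ∧ ∀ u ∈ W, ¬ leafOn G S u → G.dist r u ≤ G.dist r v := by
  classical
  set A := {v ∈ W | ¬ leafOn G S v} with hA
  obtain ⟨v, hvA, hvmax⟩ := Set.exists_max_image A (fun x => G.dist r x) (Set.toFinite _)
    (by obtain ⟨v, h1, h2⟩ := hne; exact ⟨v, h1, h2⟩)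
  refine ⟨v, hvA.1, ⟨hWS hvA.1, hvA.2, ?_⟩, fun u hu hu' => hvmax u ⟨hu, hu'⟩⟩
  -- every non-leaf S-neighbor of v is the parent of v towards r
  have key : ∀ x₁ ∈ {u ∈ Nbr G S v | ¬ leafOn G S u}, ∀ x₂ ∈ {u ∈ Nbr G S v | ¬ leafOn G S u},
      x₁ = x₂ := by
    intro x₁ hx₁ x₂ hx₂
    have hpar : ∀ x ∈ {u ∈ Nbr G S v | ¬ leafOn G S u}, G.Adj v x ∧
        G.dist r x + 1 = G.dist r v := by
      intro x hx
      obtain ⟨⟨hxS, hadj⟩, hxnl⟩ := hx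
      refine ⟨hadj, ?_⟩
      rcases adj_dichot hT (r := r) hadj with hc | hc
      · omega
      · exfalso
        have hxW : x ∈ W := hcl v hvA.1 x hxS hadj hc
        have := hvmax x ⟨hxW, hxnl⟩
        omega
    obtain ⟨ha1, hd1⟩ := hpar x₁ hx₁
    obtain ⟨ha2, hd2⟩ := hpar x₂ hx₂
    exact parent_unique hT ha1 hd1 ha2 hd2
  rw [Set.ncard_le_one_iff (Set.toFinite _)]
  intro a b ha hb
  exact key a ha b hb


lemma pair_case (hT : G.IsTree) {S : Set V} (hS : ConnOn G S) {u x : V} (hu : u ∈ S)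
    (hNu : Nbr G S u = {x}) (hNx : Nbr G S x = {u}) : ∀ w ∈ S, w = u ∨ w = x := by
  intro w hw
  by_contra hcon
  push_neg at hcon
  obtain ⟨hwu, hwx⟩ := hcon
  have hxS : x ∈ S := by
    have : x ∈ Nbr G S u := hNu ▸ rfl
    exact this.1
  obtain ⟨y, hy, hyd⟩ := exists_parent hT (r := w) (Ne.symm hwu)
  have hyS : y ∈ S := by
    refine btw_mem hT hS hu hw ?_
    rw [Btw]
    have h1 : G.dist u y = 1 := by rw [dist_eq_one_iff_adj]; exact hy
    rw [dcomm G w y, dcomm G w u] at hyd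
    omega
  have hyx : y = x := by
    have : y ∈ Nbr G S u := ⟨hyS, hy⟩
    rw [hNu] at this
    exact this
  subst hyx
  obtain ⟨z, hz, hzd⟩ := exists_parent hT (r := w) (Ne.symm hwx)
  have hzS : z ∈ S := by
    refine btw_mem hT hS hxS hw ?_
    rw [Btw]
    have h1 : G.dist y z = 1 := by rw [dist_eq_one_iff_adj]; exact hz
    rw [dcomm G w z, dcomm G w y] at hzd
    omega
  have hzu : z = u := by
    have : z ∈ Nbr G S y := ⟨hzS, hz⟩
    rw [hNx] at this
    exact this
  subst hzu
  omega

lemma star_good [Fintype V] (hT : G.IsTree) {S : Set V} (hS : ConnOn G S)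
    (h1 : (ALon G S).ncard ≤ 1) : Good G S 1 := by
  classical
  rcases Set.eq_empty_or_nonempty S with hSe | hSne
  · exact ⟨fun _ => 0, fun _ => 0, fun a ha => by simp [hSe] at ha,
      fun v hv => by simp [hSe] at hv, fun u hu => by simp [hSe] at hu⟩
  have hstar : ∃ z ∈ S, ∀ v ∈ S, v ≠ z → Nbr G S v = {z} := by
    set A := {v ∈ S | ¬ leafOn G S v} with hA
    have hAsub : ∀ x ∈ A, ∀ y ∈ A, x = y := by
      by_contra hcon
      push_neg at hcon
      obtain ⟨v₁, hv₁, v₂, hv₂, hne⟩ := hcon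
      obtain ⟨w₁, hw₁W, hw₁AL, hmax₁⟩ := farthest_AL hT hS (Set.Subset.refl S) (r := v₁)
        (fun v _ x hx _ _ => hx) ⟨v₁, hv₁.1, hv₁.2⟩
      obtain ⟨w₂, hw₂W, hw₂AL, hmax₂⟩ := farthest_AL hT hS (Set.Subset.refl S) (r := w₁)
        (fun v _ x hx _ _ => hx) ⟨v₁, hv₁.1, hv₁.2⟩
      have hne' : w₂ ≠ w₁ := by
        obtain ⟨u, huA⟩ : ∃ u, u ∈ A ∧ u ≠ w₁ := by
          by_cases h : v₁ = w₁
          · exact ⟨v₂, hv₂, by rw [← h]; exact hne.symm⟩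
          · exact ⟨v₁, hv₁, h⟩
        have hd1 : 1 ≤ G.dist w₁ u := by
          have := hT.isConnected.pos_dist_of_ne (Ne.symm huA.2)
          omega
        have := hmax₂ u huA.1.1 huA.1.2
        intro he
        rw [he] at this
        rw [SimpleGraph.dist_self] at this
        omega
      have : 1 < (ALon G S).ncard := by
        rw [Set.one_lt_ncard_iff (Set.toFinite _)]
        exact ⟨w₂, w₁, hw₂AL, hw₁AL, hne'⟩
      omega
    by_cases hA0 : ∃ z₀, z₀ ∈ A
    · obtain ⟨z₀, hz₀⟩ := hA0
      refine ⟨z₀, hz₀.1, ?_⟩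
      intro v hv hvz
      have hvleaf : leafOn G S v := by
        by_contra h
        exact hvz (hAsub v ⟨hv, h⟩ z₀ hz₀)
      obtain ⟨x, hx⟩ := Set.ncard_eq_one.mp hvleaf
      by_cases hxz : x = z₀
      · rw [hx, hxz]
      · exfalso
        have hxS : x ∈ S := by
          have : x ∈ Nbr G S v := hx ▸ rfl
          exact this.1
        have hxleaf : leafOn G S x := by
          by_contra h
          exact hxz (hAsub x ⟨hxS, h⟩ z₀ hz₀)
        obtain ⟨x', hx'⟩ := Set.ncard_eq_one.mp hxleaf
        have hvx' : v ∈ Nbr G S x := by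
          have : x ∈ Nbr G S v := hx ▸ rfl
          exact ⟨hv, this.2.symm⟩
        rw [hx'] at hvx'
        have hNx : Nbr G S x = {v} := by rw [hx', hvx']
        have := pair_case hT hS hv hx hNx z₀ hz₀.1
        rcases this with h | h
        · exact hvz h.symm
        · exact hxz h.symm
    · -- all vertices are leaves
      push_neg at hA0
      have hleaf : ∀ v ∈ S, leafOn G S v := by
        intro v hv
        by_contra h
        exact hA0 v ⟨hv, h⟩
      obtain ⟨u, hu⟩ := hSne
      by_cases hone : ∀ w ∈ S, w = u
      · exact ⟨u, hu, fun v hv hvu => absurd (hone v hv) hvu⟩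
      · obtain ⟨x, hx⟩ := Set.ncard_eq_one.mp (hleaf u hu)
        have hxS : x ∈ S := by
          have : x ∈ Nbr G S u := hx ▸ rfl
          exact this.1
        obtain ⟨x', hx'⟩ := Set.ncard_eq_one.mp (hleaf x hxS)
        have hux' : u ∈ Nbr G S x := by
          have : x ∈ Nbr G S u := hx ▸ rfl
          exact ⟨hu, this.2.symm⟩
        rw [hx'] at hux'
        have hNx : Nbr G S x = {u} := by rw [hx', hux']
        refine ⟨x, hxS, ?_⟩
        intro v hv hvx
        rcases pair_case hT hS hu hx hNx v hv with h | h
        · rw [h, hx]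
        · exact absurd h hvx
  obtain ⟨z, hz, hstar⟩ := hstar
  set n := Fintype.card V with hn
  set e := Fintype.equivFin V with he
  refine ⟨fun v => if v = z then n else (e v : ℕ), fun _ => 0, ?_, fun v _ => Nat.zero_lt_one, ?_⟩
  · intro a _ b _ hab
    dsimp only at hab
    by_cases ha : a = z
    · by_cases hb : b = z
      · rw [ha, hb]
      · exfalso
        rw [if_pos ha, if_neg hb] at hab
        exact ne_of_lt (e b).2 hab.symm
    · by_cases hb : b = z
      · exfalso
        rw [if_neg ha, if_pos hb] at hab
        exact ne_of_lt (e a).2 hab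
      · rw [if_neg ha, if_neg hb] at hab
        exact e.injective (Fin.val_injective hab)
  · intro u hu v hv w hw h4 h5 _ h7
    dsimp only at h4 h5
    have hfle : ∀ x : V, (if x = z then n else (e x : ℕ)) ≤ n := by
      intro x
      by_cases hxz : x = z
      · simp [hxz]
      · rw [if_neg hxz]
        exact le_of_lt (e x).2
    have hvz : v ≠ z := by
      intro hveq
      have := hfle w
      simp [hveq] at h5
      omega
    have huz : u ≠ z := by
      intro hueq
      have := hfle v
      simp [hueq] at h4
      omega
    have hwz : w = z := by
      have hmem : w ∈ Nbr G S u := ⟨hw, h7⟩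
      rw [hstar u hu huz] at hmem
      exact hmem
    have : z ∈ Nbr G S v := by rw [hstar v hv hvz]; rfl
    rw [hwz]
    exact this.2


lemma blockLt {M i j s t : ℕ} (hs : s < M) (ht : t < M) :
    i * M + s < j * M + t ↔ (i < j ∨ (i = j ∧ s < t)) := by
  constructor
  · intro h
    rcases lt_trichotomy i j with hij | hij | hij
    · exact Or.inl hij
    · subst hij
      exact Or.inr ⟨rfl, by omega⟩
    · exfalso
      have h2 : (j + 1) * M ≤ i * M := Nat.mul_le_mul_right M hij
      have h3 : (j + 1) * M = j * M + M := by ring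
      omega
  · intro h
    rcases h with hij | ⟨hij, hst⟩
    · have h2 : (i + 1) * M ≤ j * M := Nat.mul_le_mul_right M hij
      have h3 : (i + 1) * M = i * M + M := by ring
      omega
    · subst hij
      omega

lemma blockEq {M i j s t : ℕ} (hs : s < M) (ht : t < M) (h : i * M + s = j * M + t) :
    i = j ∧ s = t := by
  rcases lt_trichotomy i j with hij | hij | hij
  · have := (blockLt hs ht).mpr (Or.inl hij)
    omega
  · subst hij
    omega
  · have := (blockLt ht hs).mpr (Or.inl hij)
    omega

theorem main_good [Fintype V] (hT : G.IsTree) :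
    ∀ (m : ℕ) (S : Set V), S.ncard ≤ m → ConnOn G S →
      Good G S (max 1 ((ALon G S).ncard - 1)) := by
  classical
  intro m
  induction m with
  | zero =>
      intro S hcard hconn
      have hS : S = ∅ := by
        rw [← Set.ncard_eq_zero (Set.toFinite S)]
        omega
      exact ⟨fun _ => 0, fun _ => 0, fun x hx => by simp [hS] at hx,
        fun v hv => by simp [hS] at hv, fun u hu => by simp [hS] at hu⟩
  | succ m IH =>
      intro S hcard hconn
      by_cases hsmall : (ALon G S).ncard ≤ 1
      · exact good_mono (le_max_left _ _) (star_good hT hconn hsmall)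
      push_neg at hsmall
      obtain ⟨a, b, haAL, hbAL, hab⟩ := (Set.one_lt_ncard_iff (Set.toFinite _)).mp hsmall
      have haS : a ∈ S := haAL.1
      have hbS : b ∈ S := hbAL.1
      have tri : ∀ x y z : V, G.dist x z ≤ G.dist x y + G.dist y z :=
        fun x y z => hT.isConnected.dist_triangle
      have dzero : ∀ x : V, G.dist x x = 0 := fun x => SimpleGraph.dist_self
      have dzero' : ∀ x y : V, G.dist x y = 0 → x = y :=
        fun x y h => (hT.isConnected.dist_eq_zero_iff).mp h
      have done' : ∀ x y : V, G.Adj x y → G.dist x y = 1 :=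
        fun x y h => dist_eq_one_iff_adj.mpr h
      -- the spine
      obtain ⟨P, hPmem⟩ : ∃ P : Set V, ∀ x, x ∈ P ↔ Btw G a x b :=
        ⟨{x | Btw G a x b}, fun x => Iff.rfl⟩
      have hPS : P ⊆ S := fun x hx => btw_mem hT hconn haS hbS ((hPmem x).mp hx)
      have haP : a ∈ P := by
        rw [hPmem, Btw, dzero a]
        simp
      have hbP : b ∈ P := by
        rw [hPmem, Btw, dzero b]
        simp
      -- parents towards a
      have hpar0 : ∀ v : V, ∃ x : V, (v ∈ S ∧ v ≠ a) →
          (G.Adj v x ∧ G.dist a x + 1 = G.dist a v ∧ x ∈ S ∧ Btw G v x a) := by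
        intro v
        by_cases hv : v ∈ S ∧ v ≠ a
        · obtain ⟨x, hx1, hx2⟩ := exists_parent hT (r := a) hv.2
          have hbtw : Btw G v x a := by
            rw [Btw, done' v x hx1, dcomm G x a, dcomm G v a]
            omega
          exact ⟨x, fun _ => ⟨hx1, hx2, btw_mem hT hconn hv.1 haS hbtw, hbtw⟩⟩
        · exact ⟨v, fun hc => absurd hc hv⟩
      choose par hpar using hpar0
      have hparA : ∀ v, v ∈ S → v ≠ a → G.Adj v (par v) := fun v h1 h2 => (hpar v ⟨h1, h2⟩).1
      have hparD : ∀ v, v ∈ S → v ≠ a → G.dist a (par v) + 1 = G.dist a v :=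
        fun v h1 h2 => (hpar v ⟨h1, h2⟩).2.1
      have hparS : ∀ v, v ∈ S → v ≠ a → par v ∈ S := fun v h1 h2 => (hpar v ⟨h1, h2⟩).2.2.1
      have hparB : ∀ v, v ∈ S → v ≠ a → Btw G v (par v) a :=
        fun v h1 h2 => (hpar v ⟨h1, h2⟩).2.2.2
      have hparU : ∀ v ∈ S, ∀ x, G.Adj v x → G.dist a x + 1 = G.dist a v → x = par v := by
        intro v hv x h1 h2
        have hva : v ≠ a := by
          intro he
          rw [he, dzero a] at h2
          omega
        exact parent_unique hT h1 h2 (hparA v hv hva) (hparD v hv hva)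
      -- spine facts
      have hPpar : ∀ q, q ∈ P → q ≠ a → par q ∈ P := by
        intro q hq hqa
        have hqS := hPS hq
        have h1 := (hPmem q).mp hq
        rw [Btw] at h1
        have h2 := hparD q hqS hqa
        have h3 := hparB q hqS hqa
        rw [Btw] at h3
        have h4 : G.dist q (par q) = 1 := done' q (par q) (hparA q hqS hqa)
        rw [hPmem, Btw]
        have t1 : G.dist (par q) b ≤ G.dist (par q) q + G.dist q b := tri _ _ _
        have t2 : G.dist a b ≤ G.dist a (par q) + G.dist (par q) b := tri _ _ _
        have c1 : G.dist (par q) q = G.dist q (par q) := dcomm G _ _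
        have c2 : G.dist (par q) a = G.dist a (par q) := dcomm G _ _
        have c3 : G.dist q a = G.dist a q := dcomm G _ _
        omega
      have hspineU : ∀ q₁, q₁ ∈ P → ∀ q₂, q₂ ∈ P → G.dist a q₁ = G.dist a q₂ → q₁ = q₂ := by
        intro q₁ h₁ q₂ h₂ he
        have hb₁ := (hPmem q₁).mp h₁
        have hb₂ := (hPmem q₂).mp h₂
        rcases cmp_btw hT hb₁ hb₂ with h | h
        · rw [Btw] at h
          exact (dzero' q₂ q₁ (by omega)).symm
        · rw [Btw] at h hb₁ hb₂
          exact dzero' q₁ q₂ (by omega)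
      -- branches
      obtain ⟨D, hDmem⟩ : ∃ D : V → Set V, ∀ c v, v ∈ D c ↔ (v ∈ S ∧ Btw G v c a) :=
        ⟨fun c => {v | v ∈ S ∧ Btw G v c a}, fun c v => Iff.rfl⟩
      obtain ⟨Anc, hAncmem⟩ : ∃ A : Set V, ∀ c, c ∈ A ↔ (c ∈ S ∧ c ∉ P ∧ par c ∈ P) :=
        ⟨{c | c ∈ S ∧ c ∉ P ∧ par c ∈ P}, fun c => Iff.rfl⟩
      have hDS : ∀ c, D c ⊆ S := fun c v hv => ((hDmem c v).mp hv).1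
      have hcD : ∀ c, c ∈ Anc → c ∈ D c := by
        intro c hc
        rw [hDmem]
        refine ⟨((hAncmem c).mp hc).1, ?_⟩
        rw [Btw, dzero c]
        simp
      have hDP : ∀ c, c ∈ Anc → ∀ v, v ∈ D c → v ∉ P := by
        intro c hc v hv hvP
        obtain ⟨hvS, hbtw⟩ := (hDmem c v).mp hv
        apply ((hAncmem c).mp hc).2.1
        rw [hPmem, Btw]
        rw [Btw] at hbtw
        have h1 := (hPmem v).mp hvP
        rw [Btw] at h1
        have t1 : G.dist c b ≤ G.dist c v + G.dist v b := tri _ _ _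
        have t2 : G.dist a b ≤ G.dist a c + G.dist c b := tri _ _ _
        have c1 : G.dist a c = G.dist c a := dcomm G _ _
        have c2 : G.dist c v = G.dist v c := dcomm G _ _
        have c3 : G.dist a v = G.dist v a := dcomm G _ _
        omega
      have haD : ∀ c, c ∈ Anc → a ∉ D c := by
        intro c hc hmem
        obtain ⟨_, hbtw⟩ := (hDmem c a).mp hmem
        rw [Btw, dzero a] at hbtw
        have : c = a := dzero' c a (by omega)
        exact ((hAncmem c).mp hc).2.1 (this ▸ haP)
      have hbD : ∀ c, c ∈ Anc → b ∉ D c := fun c hc hmem => hDP c hc b hmem hbP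
      have hchild : ∀ c, c ∈ Anc → ∀ v, v ∈ D c → ∀ x, x ∈ S → G.Adj v x →
          G.dist a x = G.dist a v + 1 → x ∈ D c := by
        intro c hc v hv x hxS hadj hdx
        obtain ⟨hvS, hbtw⟩ := (hDmem c v).mp hv
        rw [hDmem]
        refine ⟨hxS, ?_⟩
        rw [Btw] at hbtw ⊢
        have h2 : G.dist x v = 1 := done' x v hadj.symm
        have t1 : G.dist x c ≤ G.dist x v + G.dist v c := tri _ _ _
        have t2 : G.dist x a ≤ G.dist x c + G.dist c a := tri _ _ _
        have c1 : G.dist x a = G.dist a x := dcomm G _ _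
        have c2 : G.dist v a = G.dist a v := dcomm G _ _
        omega
      have hparD2 : ∀ c, c ∈ Anc → ∀ v, v ∈ D c → v ≠ c → par v ∈ D c := by
        intro c hc v hv hvc
        obtain ⟨hvS, hbtw⟩ := (hDmem c v).mp hv
        have hva : v ≠ a := fun he => (haD c hc) (he ▸ hv)
        have hdvc : G.dist v c ≠ 0 := fun h => hvc (dzero' v c h)
        by_cases hdv1 : G.dist v c = 1
        · have hceq : c = par v := by
            refine hparU v hvS c (by rw [← dist_eq_one_iff_adj]; exact hdv1) ?_
            rw [Btw] at hbtw
            have c1 : G.dist c a = G.dist a c := dcomm G _ _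
            have c2 : G.dist v a = G.dist a v := dcomm G _ _
            omega
          rw [← hceq]
          exact hcD c hc
        · have hpB := hparB v hvS hva
          rcases cmp_btw hT hpB hbtw with h | h
          · exfalso
            rw [Btw] at h
            have h4 : G.dist v (par v) = 1 := done' v (par v) (hparA v hvS hva)
            omega
          · rw [hDmem]
            exact ⟨hparS v hvS hva, h⟩
      have hAncSub : ∀ c₁, c₁ ∈ Anc → ∀ c₂, c₂ ∈ Anc → Btw G c₁ c₂ a → c₁ = c₂ := by
        intro c₁ h₁ c₂ h₂ hbtw
        by_contra hne
        have hc₁D : c₁ ∈ D c₂ := by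
          rw [hDmem]
          exact ⟨((hAncmem c₁).mp h₁).1, hbtw⟩
        have hp : par c₁ ∈ D c₂ := hparD2 c₂ h₂ c₁ hc₁D hne
        obtain ⟨hpS, hpbtw⟩ := (hDmem c₂ (par c₁)).mp hp
        -- c₂ is between (par c₁) ∈ P and a, hence c₂ ∈ P, contradiction
        apply ((hAncmem c₂).mp h₂).2.1
        have hq : par c₁ ∈ P := ((hAncmem c₁).mp h₁).2.2
        have hqb := (hPmem (par c₁)).mp hq
        rw [hPmem, Btw]
        rw [Btw] at hpbtw hqb
        have t1 : G.dist c₂ b ≤ G.dist c₂ (par c₁) + G.dist (par c₁) b := tri _ _ _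
        have t2 : G.dist a b ≤ G.dist a c₂ + G.dist c₂ b := tri _ _ _
        have c1 : G.dist a c₂ = G.dist c₂ a := dcomm G _ _
        have c2 : G.dist c₂ (par c₁) = G.dist (par c₁) c₂ := dcomm G _ _
        have c3 : G.dist a (par c₁) = G.dist (par c₁) a := dcomm G _ _
        omega
      have hDuniq : ∀ c₁, c₁ ∈ Anc → ∀ c₂, c₂ ∈ Anc → ∀ v, v ∈ D c₁ → v ∈ D c₂ → c₁ = c₂ := by
        intro c₁ h₁ c₂ h₂ v hv₁ hv₂
        obtain ⟨hvS, hb₁⟩ := (hDmem c₁ v).mp hv₁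
        obtain ⟨_, hb₂⟩ := (hDmem c₂ v).mp hv₂
        rcases cmp_btw hT hb₁ hb₂ with h | h
        · refine (hAncSub c₂ h₂ c₁ h₁ ?_).symm
          rw [Btw] at h hb₁ hb₂ ⊢
          omega
        · exact hAncSub c₁ h₁ c₂ h₂ h
      have hexD : ∀ k : ℕ, ∀ v, v ∈ S → v ∉ P → G.dist a v ≤ k → ∃ c, c ∈ Anc ∧ v ∈ D c := by
        intro k
        induction k with
        | zero =>
            intro v hv hvP hd
            exact absurd ((dzero' a v (by omega)) ▸ haP) hvP
        | succ k IHk =>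
            intro v hv hvP hd
            have hva : v ≠ a := fun he => hvP (he ▸ haP)
            by_cases hq : par v ∈ P
            · have hAncv : v ∈ Anc := (hAncmem v).mpr ⟨hv, hvP, hq⟩
              exact ⟨v, hAncv, hcD v hAncv⟩
            · have h1 := hparD v hv hva
              obtain ⟨c, hcA, hcD'⟩ := IHk (par v) (hparS v hv hva) hq (by omega)
              refine ⟨c, hcA, ?_⟩
              rw [hDmem]
              refine ⟨hv, ?_⟩
              obtain ⟨_, hb2⟩ := (hDmem c (par v)).mp hcD'
              have hb1 := hparB v hv hva
              rw [Btw] at hb1 hb2 ⊢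
              have h4 : G.dist v (par v) = 1 := done' v (par v) (hparA v hv hva)
              have t1 : G.dist v c ≤ G.dist v (par v) + G.dist (par v) c := tri _ _ _
              have t2 : G.dist v a ≤ G.dist v c + G.dist c a := tri _ _ _
              omega
      have hNbrv : ∀ c, c ∈ Anc → ∀ v, v ∈ D c → v ≠ c → Nbr G (D c) v = Nbr G S v := by
        intro c hc v hv hvc
        ext x
        constructor
        · intro hx
          exact ⟨hDS c hx.1, hx.2⟩
        · intro hx
          refine ⟨?_, hx.2⟩
          rcases adj_dichot hT (r := a) hx.2 with h | h
          · have : x = par v := hparU v (hDS c hv) x hx.2 (by omega)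
            rw [this]
            exact hparD2 c hc v hv hvc
          · exact hchild c hc v hv x hx.1 hx.2 h
      have hNbrc : ∀ c, c ∈ Anc → Nbr G (D c) c = Nbr G S c \ {par c} := by
        intro c hc
        ext x
        constructor
        · intro hx
          refine ⟨⟨hDS c hx.1, hx.2⟩, ?_⟩
          intro hxp
          rw [Set.mem_singleton_iff] at hxp
          exact (hDP c hc x hx.1) (hxp ▸ ((hAncmem c).mp hc).2.2)
        · intro hx
          obtain ⟨⟨hxS, hadj⟩, hxp⟩ := hx
          rw [Set.mem_singleton_iff] at hxp
          refine ⟨?_, hadj⟩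
          rcases adj_dichot hT (r := a) hadj with h | h
          · exact absurd (hparU c ((hAncmem c).mp hc).1 x hadj (by omega)) hxp
          · exact hchild c hc c (hcD c hc) x hxS hadj h
      have hca_ne : ∀ c, c ∈ Anc → c ≠ a := fun c hc he => ((hAncmem c).mp hc).2.1 (he ▸ haP)
      have hparNbr : ∀ c, c ∈ Anc → par c ∈ Nbr G S c := by
        intro c hc
        exact ⟨hparS c ((hAncmem c).mp hc).1 (hca_ne c hc),
          hparA c ((hAncmem c).mp hc).1 (hca_ne c hc)⟩
      have hDtriv : ∀ c, c ∈ Anc → leafOn G S c → D c = {c} := by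
        intro c hc hleaf
        ext v
        rw [Set.mem_singleton_iff]
        constructor
        · intro hv
          by_contra hvc
          obtain ⟨hvS, hbtw⟩ := (hDmem c v).mp hv
          have hcS := ((hAncmem c).mp hc).1
          obtain ⟨x, hx1, hx2⟩ := exists_parent hT (r := v) (fun h : c = v => hvc h.symm)
          have hbx : Btw G c x v := by
            rw [Btw, done' c x hx1, dcomm G x v, dcomm G c v]
            omega
          have hxS : x ∈ S := btw_mem hT hconn hcS hvS hbx
          have hxne : x ≠ par c := by
            intro he
            have hx2' : G.dist v (par c) + 1 = G.dist v c := he ▸ hx2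
            rw [Btw] at hbtw
            have hp := hparD c hcS (hca_ne c hc)
            have t1 : G.dist v a ≤ G.dist v (par c) + G.dist (par c) a := tri _ _ _
            have c1 : G.dist (par c) a = G.dist a (par c) := dcomm G _ _
            have c2 : G.dist c a = G.dist a c := dcomm G _ _
            omega
          have h2 : 1 < (Nbr G S c).ncard := by
            rw [Set.one_lt_ncard_iff (Set.toFinite _)]
            exact ⟨x, par c, ⟨hxS, hx1⟩, hparNbr c hc, hxne⟩
          rw [leafOn] at hleaf
          omega
        · intro h
          rw [h]
          exact hcD c hc
      -- a nontrivial branch forces at least 3 almost-leaves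
      have ht3 : ∀ c, c ∈ Anc → ¬ leafOn G S c → 3 ≤ (ALon G S).ncard := by
        intro c hc hnl
        obtain ⟨z, hzD, hzAL, _⟩ := farthest_AL hT hconn (hDS c) (r := a)
          (fun v hv x hx hadj hd => hchild c hc v hv x hx hadj hd) ⟨c, hcD c hc, hnl⟩
        have hza : z ≠ a := fun he => (hDP c hc z hzD) (he ▸ haP)
        have hzb : z ≠ b := fun he => (hDP c hc z hzD) (he ▸ hbP)
        have hsub : ({a, b, z} : Set V) ⊆ ALon G S := by
          intro x hx
          rcases hx with rfl | rfl | rfl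
          · exact haAL
          · exact hbAL
          · exact hzAL
        have h3 : ({a, b, z} : Set V).ncard = 3 := by
          rw [Set.ncard_eq_three]
          exact ⟨a, b, z, hab, Ne.symm hza, Ne.symm hzb, rfl⟩
        calc 3 = ({a, b, z} : Set V).ncard := h3.symm
          _ ≤ (ALon G S).ncard := Set.ncard_le_ncard hsub (Set.toFinite _)
      -- counting almost-leaves in a branch
      have hcount : ∀ c, c ∈ Anc → ¬ leafOn G S c →
          (ALon G (D c)).ncard ≤ (ALon G S).ncard - 1 := by
        intro c hc hnl
        have hcS := ((hAncmem c).mp hc).1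
        have habsub : ({a, b} : Set V) ⊆ ALon G S := by
          intro x hx
          rcases hx with rfl | rfl
          · exact haAL
          · exact hbAL
        have hdiff : (ALon G S \ {a, b}).ncard = (ALon G S).ncard - 2 := by
          rw [Set.ncard_diff habsub (Set.toFinite _), Set.ncard_pair hab]
        obtain ⟨x₀, hx₀⟩ : ∃ x₀ : V, ALon G (D c) ⊆ (ALon G S \ {a, b}) ∪ {x₀} := by
          by_cases hcl : leafOn G (D c) c
          · obtain ⟨x₀, hx₀⟩ := Set.ncard_eq_one.mp hcl
            refine ⟨x₀, ?_⟩
            intro v hvAL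
            obtain ⟨hvD, hvnl, hvcnt⟩ := hvAL
            by_cases hvx : v = x₀
            · exact Or.inr (by rw [Set.mem_singleton_iff]; exact hvx)
            left
            have hvc : v ≠ c := by
              intro he
              exact (he ▸ hvnl) hcl
            have hNv : Nbr G (D c) v = Nbr G S v := hNbrv c hc v hvD hvc
            refine ⟨⟨hDS c hvD, by rw [leafOn, ← hNv]; exact hvnl, ?_⟩, ?_⟩
            · have hsetEq : {u ∈ Nbr G S v | ¬ leafOn G S u} =
                  {u ∈ Nbr G (D c) v | ¬ leafOn G (D c) u} := by
                rw [hNv]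
                ext u
                simp only [Set.mem_setOf_eq, Set.mem_sep_iff]
                constructor
                · intro hu
                  refine ⟨hu.1, ?_⟩
                  by_cases huc : u = c
                  · exfalso
                    -- u = c ∈ Nbr S v = Nbr (D c) v, so v ∈ Nbr (D c) c = {x₀}
                    have hcv : v ∈ Nbr G (D c) c := by
                      have : u ∈ Nbr G (D c) v := by rw [hNv]; exact hu.1
                      exact ⟨hvD, (huc ▸ this.2).symm⟩
                    rw [hx₀, Set.mem_singleton_iff] at hcv
                    exact hvx hcv
                  · have huD : u ∈ D c := by
                      have : u ∈ Nbr G (D c) v := by rw [hNv]; exact hu.1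
                      exact this.1
                    rw [leafOn, hNbrv c hc u huD huc]
                    exact hu.2
                · intro hu
                  refine ⟨hu.1, ?_⟩
                  by_cases huc : u = c
                  · exfalso
                    have hcv : v ∈ Nbr G (D c) c := by
                      have : u ∈ Nbr G (D c) v := by rw [hNv]; exact hu.1
                      exact ⟨hvD, (huc ▸ this.2).symm⟩
                    rw [hx₀, Set.mem_singleton_iff] at hcv
                    exact hvx hcv
                  · have huD : u ∈ D c := by
                      have : u ∈ Nbr G (D c) v := by rw [hNv]; exact hu.1
                      exact this.1
                    rw [leafOn, ← hNbrv c hc u huD huc]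
                    exact hu.2
              rw [hsetEq]
              exact hvcnt
            · simp only [Set.mem_insert_iff, Set.mem_singleton_iff]
              push_neg
              exact ⟨fun he => haD c hc (he ▸ hvD), fun he => hbD c hc (he ▸ hvD)⟩
          · -- c is not a leaf of the branch either; exceptional vertex is c itself
            refine ⟨c, ?_⟩
            intro v hvAL
            obtain ⟨hvD, hvnl, hvcnt⟩ := hvAL
            by_cases hvx : v = c
            · exact Or.inr (by rw [Set.mem_singleton_iff]; exact hvx)
            left
            have hNv : Nbr G (D c) v = Nbr G S v := hNbrv c hc v hvD hvx
            refine ⟨⟨hDS c hvD, by rw [leafOn, ← hNv]; exact hvnl, ?_⟩, ?_⟩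
            · have hsetEq : {u ∈ Nbr G S v | ¬ leafOn G S u} =
                  {u ∈ Nbr G (D c) v | ¬ leafOn G (D c) u} := by
                rw [hNv]
                ext u
                simp only [Set.mem_setOf_eq, Set.mem_sep_iff]
                have hpred : u ∈ Nbr G S v → (¬ leafOn G S u ↔ ¬ leafOn G (D c) u) := by
                  intro hu
                  by_cases huc : u = c
                  · subst huc
                    constructor
                    · intro _; exact hcl
                    · intro _; exact hnl
                  · have huD : u ∈ D c := by
                      have : u ∈ Nbr G (D c) v := by rw [hNv]; exact hu
                      exact this.1
                    rw [leafOn, leafOn, hNbrv c hc u huD huc]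
                constructor
                · intro hu
                  exact ⟨hu.1, (hpred hu.1).mp hu.2⟩
                · intro hu
                  exact ⟨hu.1, (hpred hu.1).mpr hu.2⟩
              rw [hsetEq]
              exact hvcnt
            · simp only [Set.mem_insert_iff, Set.mem_singleton_iff]
              push_neg
              exact ⟨fun he => haD c hc (he ▸ hvD), fun he => hbD c hc (he ▸ hvD)⟩
        have h1 := Set.ncard_le_ncard hx₀ (Set.toFinite _)
        have h2 := Set.ncard_union_le (ALon G S \ {a, b}) ({x₀} : Set V)
        have h3 : ({x₀} : Set V).ncard = 1 := Set.ncard_singleton x₀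
        have h4 := ht3 c hc hnl
        omega
      -- connectivity of branches
      have hconnD : ∀ c, c ∈ Anc → ConnOn G (D c) := by
        intro c hc
        have hgeo : ∀ w, w ∈ D c → ∃ p : G.Walk w c, ∀ x ∈ p.support, x ∈ D c := by
          intro w hw
          obtain ⟨hwS, hwbtw⟩ := (hDmem c w).mp hw
          obtain ⟨p, hplen⟩ := hT.isConnected.exists_walk_length_eq_dist w c
          have hp := p.isPath_of_length_eq_dist hplen
          refine ⟨p, ?_⟩
          intro x hx
          have hbx := support_btw hT hp hx
          have hxS : x ∈ S := btw_mem hT hconn hwS (hDS c (hcD c hc)) hbx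
          rw [hDmem]
          refine ⟨hxS, ?_⟩
          rw [Btw] at hbx hwbtw ⊢
          have t1 : G.dist x a ≤ G.dist x c + G.dist c a := tri _ _ _
          have t2 : G.dist w a ≤ G.dist w x + G.dist x a := tri _ _ _
          omega
        intro u hu v hv
        obtain ⟨p₁, hp₁⟩ := hgeo u hu
        obtain ⟨p₂, hp₂⟩ := hgeo v hv
        refine ⟨p₁.append p₂.reverse, ?_⟩
        intro x hx
        rw [Walk.mem_support_append_iff] at hx
        rcases hx with hx | hx
        · exact hp₁ x hx
        · exact hp₂ x (by rwa [Walk.support_reverse, List.mem_reverse] at hx)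
      -- induction hypothesis data for nontrivial branches
      have hbranch : ∀ c : V, ∃ g Cc : V → ℕ, (c ∈ Anc ∧ ¬ leafOn G S c) →
          (Set.InjOn g (D c) ∧ (∀ v ∈ D c, g v < (D c).ncard) ∧
           (∀ v ∈ D c, Cc v < max 1 ((ALon G (D c)).ncard - 1)) ∧
           ∀ u ∈ D c, ∀ v ∈ D c, ∀ w ∈ D c, g u < g v → g v < g w → Cc u = Cc v →
             G.Adj u w → G.Adj v w) := by
        intro c
        by_cases hcond : c ∈ Anc ∧ ¬ leafOn G S c
        · have hlt : (D c).ncard ≤ m := by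
            have h1 : D c ⊂ S := ⟨hDS c, fun hsub => haD c hcond.1 (hsub haS)⟩
            have := Set.ncard_lt_ncard h1 (Set.toFinite S)
            omega
          obtain ⟨g, Cc, h1, h2, h3, h4⟩ := good_bounded (IH (D c) hlt (hconnD c hcond.1))
          exact ⟨g, Cc, fun _ => ⟨h1, h2, h3, h4⟩⟩
        · exact ⟨fun _ => 0, fun _ => 0, fun hcond' => absurd hcond' hcond⟩
      choose gB CB hgB using hbranch
      -- numeric setup
      set n := Fintype.card V with hn
      have hn1 : 1 ≤ n := Fintype.card_pos_iff.mpr ⟨a⟩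
      set e := Fintype.equivFin V with he
      have hEn : ∀ v : V, (e v : ℕ) < n := fun v => (e v).2
      have heInj : ∀ x y : V, (e x : ℕ) = (e y : ℕ) → x = y :=
        fun x y h => e.injective (Fin.val_injective h)
      set M1 := n * n with hM1
      set M := 2 * (n * n) + 2 with hM
      have hnM1 : n ≤ M1 := by
        rw [hM1]
        calc n = 1 * n := (one_mul n).symm
          _ ≤ n * n := Nat.mul_le_mul_right n hn1
      have hM1M : M1 < M := by omega
      have hDcard : ∀ c, (D c).ncard ≤ n := by
        intro c
        have := Set.ncard_le_ncard (Set.subset_univ (D c)) (Set.toFinite _)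
        rwa [Set.ncard_univ, Nat.card_eq_fintype_card] at this
      have hgBn : ∀ c, (c ∈ Anc ∧ ¬ leafOn G S c) → ∀ v ∈ D c, gB c v < n :=
        fun c hcnd v hv => lt_of_lt_of_le ((hgB c hcnd).2.1 v hv) (hDcard c)
      have hsubBr : ∀ c, (c ∈ Anc ∧ ¬ leafOn G S c) → ∀ v ∈ D c,
          M1 + 1 + (e c : ℕ) * n + gB c v < M := by
        intro c hcnd v hv
        have h1 : (e c : ℕ) * n + gB c v < ((e c : ℕ) + 1) * n := by
          have := hgBn c hcnd v hv
          have h2 : ((e c : ℕ) + 1) * n = (e c : ℕ) * n + n := by ring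
          omega
        have h3 : ((e c : ℕ) + 1) * n ≤ n * n := Nat.mul_le_mul_right n (hEn c)
        omega
      -- anchor assignment
      have hcA0 : ∀ v : V, ∃ c, (v ∈ S ∧ v ∉ P) → (c ∈ Anc ∧ v ∈ D c) := by
        intro v
        by_cases hv : v ∈ S ∧ v ∉ P
        · obtain ⟨c, h1, h2⟩ := hexD (G.dist a v) v hv.1 hv.2 le_rfl
          exact ⟨c, fun _ => ⟨h1, h2⟩⟩
        · exact ⟨v, fun h => absurd h hv⟩
      choose cA hcA using hcA0
      have hcAeq : ∀ v, v ∈ S → v ∉ P → ∀ c, c ∈ Anc → v ∈ D c → cA v = c := by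
        intro v h1 h2 c h3 h4
        exact hDuniq (cA v) (hcA v ⟨h1, h2⟩).1 c h3 v (hcA v ⟨h1, h2⟩).2 h4
      -- the order and the classes
      obtain ⟨f, hfP, hfT, hfB⟩ : ∃ f : V → ℕ,
          (∀ v, v ∈ P → f v = G.dist a v * M + M1) ∧
          (∀ v, v ∉ P → leafOn G S (cA v) → f v = G.dist a (par (cA v)) * M + (e v : ℕ)) ∧
          (∀ v, v ∉ P → ¬ leafOn G S (cA v) → f v = G.dist a (par (cA v)) * M +
            (M1 + 1 + (e (cA v) : ℕ) * n + gB (cA v) v)) := by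
        refine ⟨fun v => if v ∈ P then G.dist a v * M + M1 else
          (if leafOn G S (cA v) then G.dist a (par (cA v)) * M + (e v : ℕ)
           else G.dist a (par (cA v)) * M + (M1 + 1 + (e (cA v) : ℕ) * n + gB (cA v) v)),
          ?_, ?_, ?_⟩
        · intro v hv
          simp [hv]
        · intro v hv hl
          simp [hv, hl]
        · intro v hv hl
          simp [hv, hl]
      obtain ⟨Cf, hCfP, hCfT, hCfB⟩ : ∃ Cf : V → ℕ,
          (∀ v, v ∈ P → Cf v = 0) ∧
          (∀ v, v ∉ P → leafOn G S (cA v) → Cf v = 0) ∧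
          (∀ v, v ∉ P → ¬ leafOn G S (cA v) → Cf v = CB (cA v) v + 1) := by
        refine ⟨fun v => if v ∈ P then 0 else
          (if leafOn G S (cA v) then 0 else CB (cA v) v + 1), ?_, ?_, ?_⟩
        · intro v hv
          simp [hv]
        · intro v hv hl
          simp [hv, hl]
        · intro v hv hl
          simp [hv, hl]
      -- shape analysis for vertices of S
      have hshape : ∀ v, v ∈ S → v ∈ P ∨
          (v ∉ P ∧ cA v ∈ Anc ∧ v ∈ D (cA v) ∧ (leafOn G S (cA v) → v = cA v)) := by
        intro v hv
        by_cases hvP : v ∈ P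
        · exact Or.inl hvP
        · right
          have h := hcA v ⟨hv, hvP⟩
          refine ⟨hvP, h.1, h.2, ?_⟩
          intro hleaf
          have hDt := hDtriv (cA v) h.1 hleaf
          have := h.2
          rw [hDt, Set.mem_singleton_iff] at this
          exact this
      have hEnM : ∀ v : V, (e v : ℕ) < M := by
        intro v
        have := hEn v
        omega
      have hEnM1 : ∀ v : V, (e v : ℕ) < M1 + 1 := by
        intro v
        have := hEn v
        omega
      refine ⟨f, Cf, ?_, ?_, ?_⟩
      · -- injectivity on S
        intro x hx y hy hfe
        rcases hshape x hx with hxP | ⟨hxP, hxA, hxD, hxT⟩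
        · rcases hshape y hy with hyP | ⟨hyP, hyA, hyD, hyT⟩
          · rw [hfP x hxP, hfP y hyP] at hfe
            obtain ⟨h1, _⟩ := blockEq hM1M hM1M hfe
            exact hspineU x hxP y hyP h1
          · by_cases hyl : leafOn G S (cA y)
            · rw [hfP x hxP, hfT y hyP hyl] at hfe
              obtain ⟨_, h2⟩ := blockEq hM1M (hEnM y) hfe
              have := hEn y
              omega
            · rw [hfP x hxP, hfB y hyP hyl] at hfe
              obtain ⟨_, h2⟩ := blockEq hM1M (hsubBr (cA y) ⟨hyA, hyl⟩ y hyD) hfe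
              omega
        · rcases hshape y hy with hyP | ⟨hyP, hyA, hyD, hyT⟩
          · by_cases hxl : leafOn G S (cA x)
            · rw [hfT x hxP hxl, hfP y hyP] at hfe
              obtain ⟨_, h2⟩ := blockEq (hEnM x) hM1M hfe
              have := hEn x
              omega
            · rw [hfB x hxP hxl, hfP y hyP] at hfe
              obtain ⟨_, h2⟩ := blockEq (hsubBr (cA x) ⟨hxA, hxl⟩ x hxD) hM1M hfe
              omega
          · by_cases hxl : leafOn G S (cA x) <;> by_cases hyl : leafOn G S (cA y)
            · rw [hfT x hxP hxl, hfT y hyP hyl] at hfe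
              obtain ⟨_, h2⟩ := blockEq (hEnM x) (hEnM y) hfe
              exact heInj x y h2
            · rw [hfT x hxP hxl, hfB y hyP hyl] at hfe
              obtain ⟨_, h2⟩ := blockEq (hEnM x) (hsubBr (cA y) ⟨hyA, hyl⟩ y hyD) hfe
              have := hEn x
              omega
            · rw [hfB x hxP hxl, hfT y hyP hyl] at hfe
              obtain ⟨_, h2⟩ := blockEq (hsubBr (cA x) ⟨hxA, hxl⟩ x hxD) (hEnM y) hfe
              have := hEn y
              omega
            · rw [hfB x hxP hxl, hfB y hyP hyl] at hfe
              obtain ⟨_, h2⟩ := blockEq (hsubBr (cA x) ⟨hxA, hxl⟩ x hxD)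
                (hsubBr (cA y) ⟨hyA, hyl⟩ y hyD) hfe
              have h2' : (e (cA x) : ℕ) * n + gB (cA x) x = (e (cA y) : ℕ) * n + gB (cA y) y := by
                omega
              obtain ⟨h3, h4⟩ := blockEq (hgBn (cA x) ⟨hxA, hxl⟩ x hxD)
                (hgBn (cA y) ⟨hyA, hyl⟩ y hyD) h2'
              have hcc : cA x = cA y := heInj _ _ h3
              rw [← hcc] at hyD h4
              exact (hgB (cA x) ⟨hxA, hxl⟩).1 hxD hyD h4
      · -- class bound
        intro v hv
        have hmax1 : 1 ≤ max 1 ((ALon G S).ncard - 1) := le_max_left _ _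
        rcases hshape v hv with hvP | ⟨hvP, hvA, hvD, hvT⟩
        · rw [hCfP v hvP]
          omega
        · by_cases hvl : leafOn G S (cA v)
          · rw [hCfT v hvP hvl]
            omega
          · rw [hCfB v hvP hvl]
            have h1 := (hgB (cA v) ⟨hvA, hvl⟩).2.2.1 v hvD
            have h2 := hcount (cA v) hvA hvl
            have h3 := ht3 (cA v) hvA hvl
            have h4 : max 1 ((ALon G (D (cA v))).ncard - 1) ≤ (ALon G S).ncard - 2 := by
              omega
            omega
      · -- consistency
        intro u hu v hv w hw h4 h5 h6 h7
        rcases hshape u hu with huP | ⟨huP, huA, huD, huT⟩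
        · -- u on the spine
          have hCu : Cf u = 0 := hCfP u huP
          have hfu := hfP u huP
          rcases adj_dichot hT (r := a) h7 with hd | hd
          · exfalso
            have hua : u ≠ a := by
              intro he
              rw [he, dzero a] at hd
              omega
            have hwpar : w = par u := hparU u hu w h7 (by omega)
            have hwP : w ∈ P := hwpar ▸ hPpar u huP hua
            have hfw := hfP w hwP
            have hdw : G.dist a (par u) + 1 = G.dist a u := hparD u hu hua
            have hlt : f u < f w := lt_trans h4 h5
            rw [hfu, hfw, hwpar] at hlt
            rcases (blockLt hM1M hM1M).mp hlt with h | h <;> omega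
          · have hwpar : u = par w := hparU w hw u h7.symm (by omega)
            rcases hshape w hw with hwP | ⟨hwP, hwA, hwD, hwT⟩
            · -- w on the spine, one step further
              have hfw := hfP w hwP
              rcases hshape v hv with hvP | ⟨hvP, hvA, hvD, hvT⟩
              · exfalso
                have hfv := hfP v hvP
                rw [hfu, hfv] at h4
                rw [hfv, hfw] at h5
                rcases (blockLt hM1M hM1M).mp h4 with h | h <;>
                  rcases (blockLt hM1M hM1M).mp h5 with h' | h' <;> omega
              · by_cases hvl : leafOn G S (cA v)
                · have hfv := hfT v hvP hvl
                  have hEv := hEn v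
                  rw [hfu, hfv] at h4
                  rw [hfv, hfw] at h5
                  have hσ : G.dist a (par (cA v)) = G.dist a w := by
                    rcases (blockLt hM1M (by omega)).mp h4 with h | h <;>
                      rcases (blockLt (by omega) hM1M).mp h5 with h' | h' <;> omega
                  have hq : par (cA v) ∈ P := ((hAncmem (cA v)).mp hvA).2.2
                  have hpw : par (cA v) = w := hspineU _ hq w hwP hσ
                  have hvT' : v = cA v := hvT hvl
                  have hcvS : cA v ∈ S := ((hAncmem (cA v)).mp hvA).1
                  have hcvne : cA v ≠ a := hca_ne (cA v) hvA
                  have hadj : G.Adj (cA v) (par (cA v)) := hparA (cA v) hcvS hcvne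
                  have hpv : par v = w := by
                    rw [hvT']
                    exact hpw
                  have hadj2 : G.Adj v (par v) := by
                    rw [hvT']
                    exact hadj
                  rw [← hpv]
                  exact hadj2
                · exfalso
                  have hCv := hCfB v hvP hvl
                  omega
            · -- w is an anchor hanging at u
              have hwAnc : w ∈ Anc := (hAncmem w).mpr ⟨hw, hwP, hwpar ▸ huP⟩
              have hcAw : cA w = w := hcAeq w hw hwP w hwAnc (hcD w hwAnc)
              by_cases hwl : leafOn G S (cA w)
              · exfalso
                have hfw := hfT w hwP hwl
                have hσ : G.dist a (par (cA w)) = G.dist a u := by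
                  rw [hcAw, ← hwpar]
                have hlt : f u < f w := lt_trans h4 h5
                rw [hfu, hfw, hσ] at hlt
                have := hEn w
                rcases (blockLt hM1M (by omega)).mp hlt with h | h <;> omega
              · exfalso
                have hwA' : cA w ∈ Anc := by
                  rw [hcAw]
                  exact hwAnc
                have hwD' : w ∈ D (cA w) := by
                  rw [hcAw]
                  exact hcD w hwAnc
                have hfw := hfB w hwP hwl
                have hσ : G.dist a (par (cA w)) = G.dist a u := by
                  rw [hcAw, ← hwpar]
                have hbndw := hsubBr (cA w) ⟨hwA', hwl⟩ w hwD'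
                rw [hfw, hσ] at h5
                rcases hshape v hv with hvP | ⟨hvP, hvA, hvD, hvT⟩
                · have hfv := hfP v hvP
                  rw [hfu, hfv] at h4
                  rw [hfv] at h5
                  rcases (blockLt hM1M hM1M).mp h4 with h | h <;>
                    rcases (blockLt hM1M hbndw).mp h5 with h' | h' <;> omega
                · by_cases hvl : leafOn G S (cA v)
                  · have hfv := hfT v hvP hvl
                    have hEv := hEn v
                    rw [hfu, hfv] at h4
                    rw [hfv] at h5
                    rcases (blockLt hM1M (by omega)).mp h4 with h | h <;>
                      rcases (blockLt (by omega) hbndw).mp h5 with h' | h' <;> omega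
                  · have hCv := hCfB v hvP hvl
                    omega
        · -- u off the spine
          by_cases hul : leafOn G S (cA u)
          · -- u is a pendant leaf hanging at a spine vertex
            have huT' : u = cA u := huT hul
            have hCu : Cf u = 0 := hCfT u huP hul
            have hfu := hfT u huP hul
            have hqP : par (cA u) ∈ P := ((hAncmem (cA u)).mp huA).2.2
            rcases adj_dichot hT (r := a) h7 with hd | hd
            · -- w = par u on the spine
              have hua : u ≠ a := fun he => huP (he ▸ haP)
              have hwpar : w = par u := hparU u hu w h7 (by omega)
              have hpupc : par u = par (cA u) := by
                rw [← huT']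
              have hwP : w ∈ P := by
                rw [hwpar, hpupc]
                exact hqP
              have hσw : G.dist a w = G.dist a (par (cA u)) := by
                rw [hwpar, hpupc]
              have hfw := hfP w hwP
              rcases hshape v hv with hvP | ⟨hvP, hvA, hvD, hvT⟩
              · exfalso
                have hfv := hfP v hvP
                have hEu := hEn u
                rw [hfu, hfv] at h4
                rw [hfv, hfw, hσw] at h5
                rcases (blockLt (by omega) hM1M).mp h4 with h | h <;>
                  rcases (blockLt hM1M hM1M).mp h5 with h' | h' <;> omega
              · by_cases hvl : leafOn G S (cA v)
                · have hfv := hfT v hvP hvl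
                  have hEu := hEn u
                  have hEv := hEn v
                  rw [hfu, hfv] at h4
                  rw [hfv, hfw, hσw] at h5
                  have hσ : G.dist a (par (cA v)) = G.dist a (par (cA u)) := by
                    rcases (blockLt (by omega) (by omega)).mp h4 with h | h <;>
                      rcases (blockLt (by omega) hM1M).mp h5 with h' | h' <;> omega
                  have hq : par (cA v) ∈ P := ((hAncmem (cA v)).mp hvA).2.2
                  have hpw : par (cA v) = w := by
                    refine hspineU _ hq w hwP ?_
                    rw [hσ, hσw]
                  have hvT' : v = cA v := hvT hvl
                  have hcvS : cA v ∈ S := ((hAncmem (cA v)).mp hvA).1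
                  have hcvne : cA v ≠ a := hca_ne (cA v) hvA
                  have hadj : G.Adj (cA v) (par (cA v)) := hparA (cA v) hcvS hcvne
                  have hpv : par v = w := by
                    rw [hvT']
                    exact hpw
                  have hadj2 : G.Adj v (par v) := by
                    rw [hvT']
                    exact hadj
                  rw [← hpv]
                  exact hadj2
                · exfalso
                  have hCv := hCfB v hvP hvl
                  omega
            · -- w would be below u : impossible, the branch of u is trivial
              exfalso
              have hwpar : u = par w := hparU w hw u h7.symm (by omega)
              have hwa : w ≠ a := by
                intro he
                rw [he, dzero a] at hd
                omega
              have hwP : w ∉ P := by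
                intro hwP
                exact huP (hwpar ▸ hPpar w hwP hwa)
              have hw' := hcA w ⟨hw, hwP⟩
              have hwc : w ≠ cA w := by
                intro he
                have hwAnc : w ∈ Anc := by
                  rw [he]
                  exact hw'.1
                exact huP (hwpar ▸ ((hAncmem w).mp hwAnc).2.2)
              have hpuD : par w ∈ D (cA w) := hparD2 (cA w) hw'.1 w hw'.2 hwc
              have huD2 : u ∈ D (cA w) := hwpar ▸ hpuD
              have hceq : cA u = cA w := hDuniq (cA u) huA (cA w) hw'.1 u huD huD2
              have hDt := hDtriv (cA u) huA hul
              have hwDu : w ∈ D (cA u) := by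
                rw [hceq]
                exact hw'.2
              rw [hDt, Set.mem_singleton_iff] at hwDu
              rw [hwDu, ← huT'] at h7
              exact G.irrefl h7
          · -- u lies in a nontrivial branch
            have hCu := hCfB u huP hul
            have hfu := hfB u huP hul
            have hvshape : v ∉ P ∧ ¬ leafOn G S (cA v) ∧ cA v ∈ Anc ∧ v ∈ D (cA v) := by
              rcases hshape v hv with hvP | ⟨hvP, hvA, hvD, hvT⟩
              · exfalso
                have := hCfP v hvP
                omega
              · by_cases hvl : leafOn G S (cA v)
                · exfalso
                  have := hCfT v hvP hvl
                  omega
                · exact ⟨hvP, hvl, hvA, hvD⟩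
            obtain ⟨hvP, hvl, hvA, hvD⟩ := hvshape
            have hfv := hfB v hvP hvl
            have hCv := hCfB v hvP hvl
            have hwD : w ∈ D (cA u) := by
              rcases adj_dichot hT (r := a) h7 with hd | hd
              · have hua : u ≠ a := fun he => huP (he ▸ haP)
                have hwpar : w = par u := hparU u hu w h7 (by omega)
                by_cases huc : u = cA u
                · exfalso
                  have hqP : par (cA u) ∈ P := ((hAncmem (cA u)).mp huA).2.2
                  have hpupc : par u = par (cA u) := by
                    rw [← huc]
                  have hwP : w ∈ P := by
                    rw [hwpar, hpupc]
                    exact hqP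
                  have hfw := hfP w hwP
                  have hσw : G.dist a w = G.dist a (par (cA u)) := by
                    rw [hwpar, hpupc]
                  have hlt : f u < f w := lt_trans h4 h5
                  have hbndu := hsubBr (cA u) ⟨huA, hul⟩ u huD
                  rw [hfu, hfw, hσw] at hlt
                  rcases (blockLt hbndu hM1M).mp hlt with h | h <;> omega
                · rw [hwpar]
                  exact hparD2 (cA u) huA u huD huc
              · exact hchild (cA u) huA u huD w hw h7 hd
            have hwP' : w ∉ P := hDP (cA u) huA w hwD
            have hcAw : cA w = cA u := hcAeq w hw hwP' (cA u) huA hwD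
            have hwl : ¬ leafOn G S (cA w) := by
              rw [hcAw]
              exact hul
            have hfw := hfB w hwP' hwl
            have hbndu := hsubBr (cA u) ⟨huA, hul⟩ u huD
            have hbndv := hsubBr (cA v) ⟨hvA, hvl⟩ v hvD
            have hbndw : M1 + 1 + (e (cA w) : ℕ) * n + gB (cA w) w < M := by
              rw [hcAw]
              exact hsubBr (cA u) ⟨huA, hul⟩ w hwD
            rw [hfu, hfv] at h4
            rw [hfv, hfw] at h5
            have h4' := (blockLt hbndu hbndv).mp h4
            have h5' := (blockLt hbndv hbndw).mp h5
            rw [hcAw] at h5'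
            have hsub4 : M1 + 1 + (e (cA u) : ℕ) * n + gB (cA u) u <
                M1 + 1 + (e (cA v) : ℕ) * n + gB (cA v) v := by
              rcases h4' with h | h
              · exfalso
                rcases h5' with h' | h' <;> omega
              · exact h.2
            have hsub5 : M1 + 1 + (e (cA v) : ℕ) * n + gB (cA v) v <
                M1 + 1 + (e (cA u) : ℕ) * n + gB (cA u) w := by
              rcases h5' with h' | h'
              · exfalso
                rcases h4' with h | h <;> omega
              · exact h'.2
            have hgu := hgBn (cA u) ⟨huA, hul⟩ u huD
            have hgv := hgBn (cA v) ⟨hvA, hvl⟩ v hvD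
            have hgw := hgBn (cA u) ⟨huA, hul⟩ w hwD
            have h4'' := (blockLt hgu hgv).mp (by omega :
              (e (cA u) : ℕ) * n + gB (cA u) u < (e (cA v) : ℕ) * n + gB (cA v) v)
            have h5'' := (blockLt hgv hgw).mp (by omega :
              (e (cA v) : ℕ) * n + gB (cA v) v < (e (cA u) : ℕ) * n + gB (cA u) w)
            have hee : (e (cA v) : ℕ) = (e (cA u) : ℕ) := by
              rcases h4'' with h | h <;> rcases h5'' with h' | h' <;> omega
            have hcc : cA v = cA u := heInj _ _ hee
            have hvD' : v ∈ D (cA u) := by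
              rw [← hcc]
              exact hvD
            have hord1 : gB (cA u) u < gB (cA u) v := by
              rcases h4'' with h | h
              · omega
              · rw [hcc] at h
                exact h.2
            have hord2 : gB (cA u) v < gB (cA u) w := by
              rcases h5'' with h' | h'
              · omega
              · rw [hcc] at h'
                exact h'.2
            have hCeq : CB (cA u) u = CB (cA u) v := by
              rw [hCu, hCv] at h6
              rw [hcc] at h6
              omega
            exact (hgB (cA u) ⟨huA, hul⟩).2.2.2 u huD v hvD' w hwD hord1 hord2 hCeq h7

end TreeThinAux


open TreeThinAux in
theorem thinness_le_almost_leaves [Fintype V] (G : SimpleGraph V) (hT : G.IsTree)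
    (t : ℕ) (ht : {v | IsAlmostLeaf G v}.ncard = t) (ht2 : 2 ≤ t) :
    Thinness G ≤ t - 1 := by
  classical
  have hNbr : ∀ x, Nbr G Set.univ x = G.neighborSet x := by
    intro x
    ext u
    simp [Nbr, SimpleGraph.mem_neighborSet]
  have hleaf : ∀ x, leafOn G Set.univ x ↔ IsLeaf G x := by
    intro x
    rw [leafOn, IsLeaf, hNbr]
  have hAL : ALon G Set.univ = {v | IsAlmostLeaf G v} := by
    ext v
    simp only [ALon, IsAlmostLeaf, Set.mem_setOf_eq, Set.mem_sep_iff, Set.mem_univ, true_and]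
    constructor
    · rintro ⟨h1, h2⟩
      refine ⟨fun hc => h1 ((hleaf v).mpr hc), ?_⟩
      have : {u | u ∈ Nbr G Set.univ v ∧ ¬ leafOn G Set.univ u} =
          {u | G.Adj v u ∧ ¬ IsLeaf G u} := by
        ext u
        simp [hNbr, hleaf, SimpleGraph.mem_neighborSet]
      rwa [← this]
    · rintro ⟨h1, h2⟩
      refine ⟨fun hc => h1 ((hleaf v).mp hc), ?_⟩
      have : {u | u ∈ Nbr G Set.univ v ∧ ¬ leafOn G Set.univ u} =
          {u | G.Adj v u ∧ ¬ IsLeaf G u} := by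
        ext u
        simp [hNbr, hleaf, SimpleGraph.mem_neighborSet]
      rwa [this]
  have hconn : ConnOn G Set.univ := by
    intro u _ v _
    obtain ⟨p⟩ := hT.isConnected.preconnected u v
    exact ⟨p, fun x _ => trivial⟩
  have hgood := main_good hT (Set.univ : Set V).ncard Set.univ le_rfl hconn
  rw [hAL, ht] at hgood
  have hmax : max 1 (t - 1) = t - 1 := by omega
  rw [hmax] at hgood
  obtain ⟨f, C, hinj, hC, hcons⟩ := hgood
  have hkt : t - 1 ∈ {k | IsKThin G k} := by
    refine ⟨fun x y => f x < f y, ?_, ?_⟩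
    · have htri : ∀ x y : V, f x < f y ∨ x = y ∨ f y < f x := by
        intro x y
        rcases lt_trichotomy (f x) (f y) with h | h | h
        · exact Or.inl h
        · exact Or.inr (Or.inl (hinj (Set.mem_univ x) (Set.mem_univ y) h))
        · exact Or.inr (Or.inr h)
      exact { trichotomous := fun x y h1 h2 => ((htri x y).resolve_left h1).resolve_right h2, irrefl := fun a h => lt_irrefl _ h,
              trans := fun a b c hab hbc => lt_trans hab hbc }
    · refine ⟨fun v => ⟨C v, hC v (Set.mem_univ v)⟩, ?_⟩
      intro u v w r1 r2 hCeq hadj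
      have hCuv : C u = C v := by
        have := congrArg Fin.val hCeq
        simpa using this
      exact hcons u (Set.mem_univ u) v (Set.mem_univ v) w (Set.mem_univ w) r1 r2 hCuv hadj
  exact Nat.sInf_le hkt
end
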